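/- arXiv:1812.09981 — 4 statements merged into one kernel-verified Lean document; each statement's English description precedes it below -/
import Mathlib

section
/- Let A be a Bernstein algebra over a field K of characteristic ≠ 2, 3, with weight function ω and barideal N = ker(ω). The following are equivalent: (i) A satisfies the ascending chain condition on subalgebras; (ii) A satisfies the ascending chain condition on subalgebras contained in N; (iii) A is finite-dimensional over K. -/
namespace BernsteinACC

variable {K A : Type*} [Field K]
    [NonUnitalNonAssocCommRing A] [Module K A] [SMulCommClass K A A] [IsScalarTower K A A]

/-- product of two submodules of a non-unital algebra -/
noncomputable def pmul (p q : Submodule K A) : Submodule K A :=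
  Submodule.map₂ (LinearMap.mul K A) p q

theorem mul_mem_pmul {p q : Submodule K A} {x y : A} (hx : x ∈ p) (hy : y ∈ q) :
    x * y ∈ pmul p q := Submodule.apply_mem_map₂ _ hx hy

theorem pmul_le {p q r : Submodule K A} (h : ∀ m ∈ p, ∀ n ∈ q, m * n ∈ r) :
    pmul p q ≤ r := Submodule.map₂_le.mpr h

theorem pmul_sup_left (p q r : Submodule K A) :
    pmul (p ⊔ q) r = pmul p r ⊔ pmul q r := Submodule.map₂_sup_left _ p q r

theorem pmul_sup_right (p q r : Submodule K A) :
    pmul p (q ⊔ r) = pmul p q ⊔ pmul p r := Submodule.map₂_sup_right _ p q r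

theorem pmul_span_span (s t : Set A) :
    pmul (Submodule.span K s) (Submodule.span K t)
      = Submodule.span K (Set.image2 (· * ·) s t) := by
  rw [pmul, Submodule.map₂_span_span]; rfl

theorem pmul_induction {p q : Submodule K A} {C : A → Prop} {x : A} (hx : x ∈ pmul p q)
    (hm : ∀ m ∈ p, ∀ n ∈ q, C (m * n)) (h0 : C 0) (ha : ∀ a b, C a → C b → C (a + b))
    (hs : ∀ (c : K) a, C a → C (c • a)) : C x := by
  have : pmul p q ≤
      { carrier := setOf C, zero_mem' := h0, add_mem' := fun {a b} => ha a b,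
        smul_mem' := fun c a => hs c a } := pmul_le fun m hm' n hn' => hm m hm' n hn'
  exact this hx

/-- a submodule of an FG submodule of a vector space is FG -/
theorem fg_of_le_fg {p q : Submodule K A} (hle : p ≤ q) (hq : q.FG) : p.FG := by
  haveI : Module.Finite K q := Module.Finite.iff_fg.mpr hq
  have h1 : (Submodule.comap q.subtype p).FG := IsNoetherian.noetherian _
  have h2 : (Submodule.comap q.subtype p).map q.subtype = p := by
    rw [Submodule.map_comap_subtype, inf_eq_right.mpr hle]
  rw [← h2]; exact h1.map _

/-- make a non-unital subalgebra from a multiplicatively closed submodule -/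
def ofSubmodule (p : Submodule K A) (h : ∀ x ∈ p, ∀ y ∈ p, x * y ∈ p) :
    NonUnitalSubalgebra K A where
  carrier := p
  add_mem' := fun ha hb => p.add_mem ha hb
  zero_mem' := p.zero_mem
  mul_mem' := fun {a b} ha hb => h a ha b hb
  smul_mem' := fun c {a} ha => p.smul_mem c ha

@[simp] theorem mem_ofSubmodule {p : Submodule K A} {h} {x : A} :
    x ∈ ofSubmodule p h ↔ x ∈ p := Iff.rfl

/-- generic construction of a strictly increasing chain of subalgebras -/
theorem chain_exists (ω : A →ₗ[K] K) (X D : Submodule K A)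
    (hX : ∀ x ∈ X, ω x = 0) (hD : ∀ x ∈ D, ω x = 0)
    (hclosed : ∀ W : Submodule K A, W ≤ X → ∀ a ∈ W ⊔ D, ∀ b ∈ W ⊔ D, a * b ∈ W ⊔ D)
    (hpick : ∀ W : Submodule K A, W.FG → W ≤ X → ∃ x ∈ X, x ∉ W ⊔ D) :
    ∃ f : ℕ → NonUnitalSubalgebra K A,
      (∀ k, ∀ x ∈ f k, ω x = 0) ∧ Monotone f ∧ ∀ n, f (n + 1) ≠ f n := by
  classical
  choose pick hpick1 hpick2 using hpick
  let T := {W : Submodule K A // W.FG ∧ W ≤ X}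
  let step : T → T := fun W =>
    ⟨W.1 ⊔ Submodule.span K {pick W.1 W.2.1 W.2.2},
      W.2.1.sup (Submodule.fg_span_singleton _),
      sup_le W.2.2 ((Submodule.span_singleton_le_iff_mem _ _).mpr (hpick1 _ W.2.1 W.2.2))⟩
  let g : ℕ → T := fun n => step^[n] ⟨⊥, Submodule.fg_bot, bot_le⟩
  have hgsucc : ∀ n, g (n + 1) = step (g n) := fun n => Function.iterate_succ_apply' _ _ _
  have hgmono : Monotone fun n => (g n).1 := by
    apply monotone_nat_of_le_succ
    intro n
    rw [hgsucc n]
    exact le_sup_left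
  let f : ℕ → NonUnitalSubalgebra K A := fun n => ofSubmodule ((g n).1 ⊔ D) (hclosed _ (g n).2.2)
  have hfmem : ∀ n x, x ∈ f n ↔ x ∈ (g n).1 ⊔ D := fun n x => Iff.rfl
  refine ⟨f, ?_, ?_, ?_⟩
  · intro k x hx
    rcases Submodule.mem_sup.mp ((hfmem k x).mp hx) with ⟨y, hy, z, hz, rfl⟩
    rw [map_add, hX y ((g k).2.2 hy), hD z hz, add_zero]
  · intro i j hij
    refine SetLike.le_def.mpr fun x hx => ?_
    rcases Submodule.mem_sup.mp ((hfmem i x).mp hx) with ⟨y, hy, z, hz, rfl⟩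
    exact (hfmem j _).mpr (Submodule.add_mem_sup (hgmono hij hy) hz)
  · intro n h
    set x := pick (g n).1 (g n).2.1 (g n).2.2 with hx
    have hxout : x ∉ (g n).1 ⊔ D := hpick2 _ (g n).2.1 (g n).2.2
    have hxin : x ∈ f (n + 1) := by
      refine (hfmem _ _).mpr (Submodule.mem_sup_left ?_)
      rw [hgsucc n]
      exact Submodule.mem_sup_right (Submodule.mem_span_singleton_self _)
    rw [h] at hxin
    exact hxout ((hfmem n x).mp hxin)

theorem identities
    (h2 : (2 : K) ≠ 0) (h3 : (3 : K) ≠ 0)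
    (ω : A →ₗ[K] K)
    (hbern : ∀ x : A, (x * x) * (x * x) = ω x ^ 2 • (x * x))
    (e : A) (he1 : ω e = 1) (hee : e * e = e) :
    (∀ n : A, ω n = 0 → (2:K) • (e * (e * n)) = e * n) ∧
    (∀ n m : A, ω n = 0 → ω m = 0 →
      (8:K) • ((e * n) * (e * m)) + (4:K) • (e * (n * m)) = (2:K) • (n * m)) ∧
    (∀ a b c : A, ω a = 0 → ω b = 0 → ω c = 0 →
      (e * a) * (b * c) + (e * b) * (a * c) + (e * c) * (a * b) = 0) := by
  have h4 : (4 : K) ≠ 0 := by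
    intro h; apply h2; have h' : (4:K) = 2 * 2 := by norm_num
    rw [h'] at h; rcases mul_eq_zero.mp h with h | h <;> exact h
  have h24 : (24 : K) ≠ 0 := by
    intro h; have h' : (24:K) = 2*(2*(2*3)) := by norm_num
    rw [h'] at h
    rcases mul_eq_zero.mp h with h | h; · exact h2 h
    rcases mul_eq_zero.mp h with h | h; · exact h2 h
    rcases mul_eq_zero.mp h with h | h; · exact h2 h
    exact h3 h
  have key : ∀ (t : K) (n : A), ω n = 0 →
      (4*t) • (e * (e*n)) + (4*t^2) • ((e*n) * (e*n)) + (2*t^2) • (e * (n*n))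
        + (4*t^3) • ((e*n) * (n*n)) + (t^4) • ((n*n) * (n*n))
      = (2*t) • (e*n) + (t^2) • (n*n) := by
    intro t n hn
    have hb := hbern (e + t • n)
    have hω1 : ω (e + t • n) = 1 := by
      rw [map_add, map_smul, he1, hn, smul_eq_mul, mul_zero, add_zero]
    rw [hω1, one_pow, one_smul] at hb
    have hsq : (e + t • n) * (e + t • n) = e + (2*t) • (e*n) + (t^2) • (n*n) := by
      simp only [mul_add, add_mul, smul_mul_assoc, mul_smul_comm, smul_smul, hee,
        show n * e = e * n from mul_comm n e]
      module
    rw [hsq] at hb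
    simp only [mul_add, add_mul, smul_mul_assoc, mul_smul_comm, smul_smul, hee,
      show (e*n) * e = e * (e*n) from mul_comm _ e,
      show (n*n) * e = e * (n*n) from mul_comm _ e,
      show (n*n) * (e*n) = (e*n) * (n*n) from mul_comm _ _] at hb
    linear_combination (norm := module) hb
  have hqq : ∀ n : A, ω n = 0 → (n*n) * (n*n) = 0 := by
    intro n hn
    rw [hbern n, hn]
    simp
  have hsq0 : ∀ n : A, ω n = 0 → (e*n) * (n*n) = 0 := by
    intro n hn
    have A1 := key 1 n hn
    have A2 := key (-1) n hn
    have A3 := key 2 n hn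
    have h24' : (24:K) • ((e*n)*(n*n)) = 0 := by
      have hq := hqq n hn
      linear_combination (norm := module) A3 - (3:K) • A1 - A2 - (12:K) • hq
    rcases smul_eq_zero.mp h24' with h | h
    · exact absurd h h24
    · exact h
  have hF1 : ∀ n : A, ω n = 0 → (2:K) • (e * (e * n)) = e * n := by
    intro n hn
    have A1 := key 1 n hn
    have A2 := key (-1) n hn
    have h8 : (4:K) • ((2:K) • (e * (e*n))) = (4:K) • (e*n) := by
      have hq := hqq n hn
      have hs := hsq0 n hn
      linear_combination (norm := module) A1 - A2 - (8:K) • hs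
    exact smul_right_injective A h4 h8
  have hF2 : ∀ n : A, ω n = 0 →
      (4:K) • ((e*n) * (e*n)) + (2:K) • (e * (n*n)) = n*n := by
    intro n hn
    have A1 := key 1 n hn
    have A2 := key (-1) n hn
    have h8 : (2:K) • ((4:K) • ((e*n)*(e*n)) + (2:K) • (e * (n*n))) = (2:K) • (n*n) := by
      have hq := hqq n hn
      linear_combination (norm := module) A1 + A2 - (2:K) • hq
    exact smul_right_injective A h2 h8
  have hPF2 : ∀ n m : A, ω n = 0 → ω m = 0 →
      (8:K) • ((e * n) * (e * m)) + (4:K) • (e * (n * m)) = (2:K) • (n * m) := by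
    intro n m hn hm
    have hnm : ω (n + m) = 0 := by rw [map_add, hn, hm, add_zero]
    have h := hF2 (n + m) hnm
    simp only [mul_add, add_mul, show m * n = n * m from mul_comm m n,
      show (e*m) * (e*n) = (e*n) * (e*m) from mul_comm _ _] at h
    linear_combination (norm := module) h - hF2 n hn - hF2 m hm
  have hT3 : ∀ a b c : A, ω a = 0 → ω b = 0 → ω c = 0 →
      (e * a) * (b * c) + (e * b) * (a * c) + (e * c) * (a * b) = 0 := by
    intro a b c ha hb hc
    have wab : ω (a + b) = 0 := by rw [map_add, ha, hb, add_zero]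
    have wac : ω (a + c) = 0 := by rw [map_add, ha, hc, add_zero]
    have wbc : ω (b + c) = 0 := by rw [map_add, hb, hc, add_zero]
    have wabc : ω (a + b + c) = 0 := by rw [map_add, wab, hc, add_zero]
    have habc := hsq0 (a + b + c) wabc
    have hab := hsq0 (a + b) wab
    have hac := hsq0 (a + c) wac
    have hbc := hsq0 (b + c) wbc
    have ha' := hsq0 a ha
    have hb' := hsq0 b hb
    have hc' := hsq0 c hc
    simp only [mul_add, add_mul,
      show b * a = a * b from mul_comm b a,
      show c * a = a * c from mul_comm c a,
      show c * b = b * c from mul_comm c b] at habc hab hac hbc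
    have h2T : (2:K) • ((e * a) * (b * c) + (e * b) * (a * c) + (e * c) * (a * b)) = 0 := by
      linear_combination (norm := module) habc - hab - hac - hbc + ha' + hb' + hc'
    rcases smul_eq_zero.mp h2T with h | h
    · exact absurd h h2
    · exact h
  exact ⟨hF1, hPF2, hT3⟩

/-- the Peirce eigenspace for eigenvalue 1/2 intersected with the barideal -/
def Uspace (ω : A →ₗ[K] K) (e : A) : Submodule K A where
  carrier := {x | ω x = 0 ∧ (2:K) • (e * x) = x}
  add_mem' := by
    rintro x y ⟨hx1, hx2⟩ ⟨hy1, hy2⟩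
    exact ⟨by rw [map_add, hx1, hy1, add_zero],
      by rw [mul_add, smul_add, hx2, hy2]⟩
  zero_mem' := ⟨map_zero ω, by rw [mul_zero, smul_zero]⟩
  smul_mem' := by
    rintro c x ⟨hx1, hx2⟩
    refine ⟨by rw [map_smul, hx1, smul_zero], ?_⟩
    rw [mul_smul_comm, smul_comm, hx2]

/-- the Peirce eigenspace for eigenvalue 0 intersected with the barideal -/
def Zspace (ω : A →ₗ[K] K) (e : A) : Submodule K A where
  carrier := {x | ω x = 0 ∧ e * x = 0}
  add_mem' := by
    rintro x y ⟨hx1, hx2⟩ ⟨hy1, hy2⟩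
    exact ⟨by rw [map_add, hx1, hy1, add_zero], by rw [mul_add, hx2, hy2, add_zero]⟩
  zero_mem' := ⟨map_zero ω, mul_zero e⟩
  smul_mem' := by
    rintro c x ⟨hx1, hx2⟩
    exact ⟨by rw [map_smul, hx1, smul_zero], by rw [mul_smul_comm, hx2, smul_zero]⟩

theorem mem_Uspace {ω : A →ₗ[K] K} {e x : A} :
    x ∈ Uspace ω e ↔ (ω x = 0 ∧ (2:K) • (e * x) = x) := Iff.rfl

theorem mem_Zspace {ω : A →ₗ[K] K} {e x : A} :
    x ∈ Zspace ω e ↔ (ω x = 0 ∧ e * x = 0) := Iff.rfl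


set_option maxHeartbeats 2000000 in
theorem infinite_chain
    (h2 : (2 : K) ≠ 0) (h3 : (3 : K) ≠ 0)
    (ω : A →ₗ[K] K) (hωmul : ∀ x y : A, ω (x * y) = ω x * ω y) (hω0 : ω ≠ 0)
    (hbern : ∀ x : A, (x * x) * (x * x) = ω x ^ 2 • (x * x))
    (hinf : ¬ (⊤ : Submodule K A).FG) :
    ∃ f : ℕ → NonUnitalSubalgebra K A,
      (∀ k, ∀ x ∈ f k, ω x = 0) ∧ Monotone f ∧ ∀ n, f (n + 1) ≠ f n := by
  classical
  have h4 : (4 : K) ≠ 0 := by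
    intro h; apply h2; have h' : (4:K) = 2 * 2 := by norm_num
    rw [h'] at h; rcases mul_eq_zero.mp h with h | h <;> exact h
  -- construct the idempotent e of weight 1
  obtain ⟨a, ha0⟩ := DFunLike.ne_iff.mp hω0
  have ha : ω a ≠ 0 := by simpa using ha0
  set e0 : A := (ω a)⁻¹ • a with he0def
  have he0 : ω e0 = 1 := by
    rw [he0def, map_smul, smul_eq_mul, inv_mul_cancel₀ ha]
  set e : A := e0 * e0 with hedef
  have he1 : ω e = 1 := by rw [hedef, hωmul, he0, one_mul]
  have hee : e * e = e := by
    have hb := hbern e0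
    rw [he0] at hb
    simpa [hedef] using hb
  obtain ⟨hF1, hPF2, hT3⟩ := identities h2 h3 ω hbern e he1 hee
  set U : Submodule K A := Uspace ω e with hUdef
  set Z : Submodule K A := Zspace ω e with hZdef
  have hUmem : ∀ x : A, x ∈ U ↔ (ω x = 0 ∧ (2:K) • (e * x) = x) := fun _ => Iff.rfl
  have hZmem : ∀ x : A, x ∈ Z ↔ (ω x = 0 ∧ e * x = 0) := fun _ => Iff.rfl
  have hUZ0 : ∀ x : A, x ∈ U → x ∈ Z → x = 0 := by
    intro x hu hz
    rw [← ((hUmem x).mp hu).2, ((hZmem x).mp hz).2, smul_zero]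
  have hUU : ∀ u ∈ U, ∀ v ∈ U, u * v ∈ Z := by
    intro u hu v hv
    obtain ⟨hu1, hu2⟩ := (hUmem u).mp hu
    obtain ⟨hv1, hv2⟩ := (hUmem v).mp hv
    refine (hZmem _).mpr ⟨by rw [hωmul, hu1, hv1, mul_zero], ?_⟩
    have hp := hPF2 u v hu1 hv1
    have h1 : (8:K) • ((e*u) * (e*v)) = (2:K) • (u * v) := by
      have he : (8:K) • ((e*u) * (e*v)) = (2:K) • (((2:K) • (e*u)) * ((2:K) • (e*v))) := by
        rw [smul_mul_assoc, mul_smul_comm, smul_smul, smul_smul]; norm_num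
      rw [he, hu2, hv2]
    have h0 : (4:K) • (e * (u * v)) = 0 := by
      linear_combination (norm := module) hp - h1
    rcases smul_eq_zero.mp h0 with h | h
    · exact absurd h h4
    · exact h
  have hUZ : ∀ u ∈ U, ∀ z ∈ Z, u * z ∈ U := by
    intro u hu z hz
    obtain ⟨hu1, hu2⟩ := (hUmem u).mp hu
    obtain ⟨hz1, hz2⟩ := (hZmem z).mp hz
    refine (hUmem _).mpr ⟨by rw [hωmul, hu1, hz1, mul_zero], ?_⟩
    have hp := hPF2 u z hu1 hz1
    rw [hz2, mul_zero, smul_zero, zero_add] at hp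
    apply smul_right_injective A h2
    linear_combination (norm := module) hp
  have hZZ : ∀ z ∈ Z, ∀ w ∈ Z, z * w ∈ U := by
    intro z hz w hw
    obtain ⟨hz1, hz2⟩ := (hZmem z).mp hz
    obtain ⟨hw1, hw2⟩ := (hZmem w).mp hw
    refine (hUmem _).mpr ⟨by rw [hωmul, hz1, hw1, mul_zero], ?_⟩
    have hp := hPF2 z w hz1 hw1
    rw [hz2, zero_mul, smul_zero, zero_add] at hp
    apply smul_right_injective A h2
    linear_combination (norm := module) hp
  have half : ∀ x ∈ U, ∀ y : A, (2:K) • ((e * x) * y) = x * y := by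
    intro x hx y
    rw [← smul_mul_assoc, ((hUmem x).mp hx).2]
  have hstar1 : ∀ a ∈ U, ∀ b ∈ U, ∀ c ∈ U,
      a * (b * c) + b * (a * c) + c * (a * b) = 0 := by
    intro a ha' b hb' c hc'
    have h := hT3 a b c ((hUmem a).mp ha').1 ((hUmem b).mp hb').1 ((hUmem c).mp hc').1
    linear_combination (norm := module) (2:K) • h - half a ha' (b*c) - half b hb' (a*c)
      - half c hc' (a*b)
  have hstar2 : ∀ a ∈ U, ∀ b ∈ U, ∀ z ∈ Z, a * (b * z) + b * (a * z) = 0 := by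
    intro a ha' b hb' z hz'
    have h := hT3 a b z ((hUmem a).mp ha').1 ((hUmem b).mp hb').1 ((hZmem z).mp hz').1
    rw [((hZmem z).mp hz').2, zero_mul, add_zero] at h
    linear_combination (norm := module) (2:K) • h - half a ha' (b*z) - half b hb' (a*z)
  have hstar3 : ∀ a ∈ U, ∀ z ∈ Z, ∀ w ∈ Z, a * (z * w) = 0 := by
    intro a ha' z hz' w hw'
    have h := hT3 a z w ((hUmem a).mp ha').1 ((hZmem z).mp hz').1 ((hZmem w).mp hw').1
    rw [((hZmem z).mp hz').2, ((hZmem w).mp hw').2, zero_mul, zero_mul, add_zero, add_zero] at h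
    have h' := half a ha' (z*w)
    rw [h, smul_zero] at h'
    exact h'.symm
  have htop : ∀ x : A, x ∈ Submodule.span K {e} ⊔ (U ⊔ Z) := by
    intro x
    set n : A := x - ω x • e with hndef
    have hn : ω n = 0 := by rw [hndef, map_sub, map_smul, he1, smul_eq_mul, mul_one, sub_self]
    set u : A := (2:K) • (e * n) with hudef
    have hu : u ∈ U := by
      refine (hUmem u).mpr ⟨?_, ?_⟩
      · rw [hudef, map_smul, hωmul, he1, hn, one_mul, smul_eq_mul, mul_zero]
      · rw [hudef, mul_smul_comm, hF1 n hn]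
    set z : A := n - u with hzdef
    have hz : z ∈ Z := by
      refine (hZmem z).mpr ⟨?_, ?_⟩
      · rw [hzdef, map_sub, hn, ((hUmem u).mp hu).1, sub_zero]
      · rw [hzdef, mul_sub, hudef, mul_smul_comm, hF1 n hn, sub_self]
    have hxeq : x = ω x • e + (u + z) := by
      rw [hzdef, hndef]; abel
    rw [hxeq]
    exact Submodule.add_mem _
      (Submodule.mem_sup_left (Submodule.smul_mem _ _ (Submodule.mem_span_singleton_self e)))
      (Submodule.mem_sup_right (Submodule.add_mem_sup hu hz))
  by_cases hZfg : Z.FG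
  · by_cases hUfg : U.FG
    · exfalso
      apply hinf
      have htop' : (⊤ : Submodule K A) = Submodule.span K {e} ⊔ (U ⊔ Z) :=
        (eq_top_iff.mpr fun x _ => htop x).symm
      rw [htop']
      exact (Submodule.fg_span_singleton e).sup (hUfg.sup hZfg)
    · -- Case 2 : Z finite, U infinite
      set P : Submodule K A := pmul U U with hPdef
      have hPZ : P ≤ Z := pmul_le hUU
      have hPfg : P.FG := fg_of_le_fg hPZ hZfg
      set sset : Set A := Set.image2 (fun m n => m * n) (↑U) (↑U) with hsset
      have hPspan : P = Submodule.span K sset := by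
        rw [hPdef, pmul, Submodule.map₂_eq_span_image2]
        simp only [LinearMap.mul_apply']
        rw [hsset]
      obtain ⟨B, hB⟩ := hPfg
      have hBmem : ∀ b : {x // x ∈ B}, (b : A) ∈ Submodule.span K sset := by
        intro b
        rw [← hPspan, ← hB]
        exact Submodule.subset_span (Finset.mem_coe.mpr b.2)
      choose tb htb1 htb2 using fun b => Submodule.mem_span_finite_of_mem_span (hBmem b)
      set T : Finset A := B.attach.biUnion tb with hT
      have hTsub : (↑T : Set A) ⊆ sset := by
        intro y hy
        simp only [hT, Finset.coe_biUnion, Set.mem_iUnion, Finset.mem_coe] at hy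
        obtain ⟨b, _, hyb⟩ := hy
        exact htb1 b hyb
      have hPT : P ≤ Submodule.span K (↑T : Set A) := by
        rw [← hB]
        refine Submodule.span_le.mpr fun b hb => ?_
        have h1 := htb2 ⟨b, hb⟩
        refine Submodule.span_mono ?_ h1
        intro y hy
        simp only [hT, Finset.coe_biUnion, Set.mem_iUnion, Finset.mem_coe]
        exact ⟨⟨b, hb⟩, Finset.mem_attach _ _, hy⟩
      set fA : A → A := fun y =>
        if h : ∃ p : A × A, p.1 ∈ U ∧ p.2 ∈ U ∧ p.1 * p.2 = y then (Classical.choose h).1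
        else 0 with hfA
      set fB : A → A := fun y =>
        if h : ∃ p : A × A, p.1 ∈ U ∧ p.2 ∈ U ∧ p.1 * p.2 = y then (Classical.choose h).2
        else 0 with hfB
      have hfact' : ∀ y ∈ sset, fA y ∈ U ∧ fB y ∈ U ∧ fA y * fB y = y := by
        intro y hy
        rw [hsset, Set.mem_image2] at hy
        obtain ⟨a1, ha1, b1, hb1, hab⟩ := hy
        have hex : ∃ p : A × A, p.1 ∈ U ∧ p.2 ∈ U ∧ p.1 * p.2 = y := ⟨(a1, b1), ha1, hb1, hab⟩
        rw [hfA, hfB]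
        simp only [dif_pos hex]
        exact Classical.choose_spec hex
      set S : Finset A := T.image fA ∪ T.image fB with hS
      have hSU : (↑S : Set A) ⊆ (↑U : Set A) := by
        intro y hy
        simp only [hS, Finset.coe_union, Set.mem_union, Finset.coe_image, Set.mem_image,
          Finset.mem_coe] at hy
        rcases hy with ⟨x, hx, rfl⟩ | ⟨x, hx, rfl⟩
        · exact (hfact' x (hTsub (Finset.mem_coe.mpr hx))).1
        · exact (hfact' x (hTsub (Finset.mem_coe.mpr hx))).2.1
      set E : Submodule K A := pmul Z (Submodule.span K (↑S : Set A)) with hE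
      set G : Submodule K A := pmul Z Z with hG
      set F' : Submodule K A := E ⊔ G with hF'
      set D : Submodule K A := P ⊔ F' with hD
      have hspanSU : Submodule.span K (↑S : Set A) ≤ U := Submodule.span_le.mpr hSU
      have hEU : E ≤ U := pmul_le fun z hz s hs => by
        rw [mul_comm]; exact hUZ s (hspanSU hs) z hz
      have hGU : G ≤ U := pmul_le hZZ
      have hF'U : F' ≤ U := sup_le hEU hGU
      obtain ⟨Zb, hZb⟩ := hZfg
      have hEfg : E.FG := by
        rw [hE, ← hZb, ← Submodule.span_eq (Submodule.span K (↑S : Set A)),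
          Submodule.span_span, pmul_span_span]
        exact Submodule.fg_span ((Zb.finite_toSet).image2 _ (S.finite_toSet))
      have hGfg : G.FG := by
        rw [hG, ← hZb, pmul_span_span]
        exact Submodule.fg_span ((Zb.finite_toSet).image2 _ (Zb.finite_toSet))
      have hF'fg : F'.FG := hEfg.sup hGfg
      have hPUE : ∀ p ∈ P, ∀ u ∈ U, p * u ∈ E := by
        intro p hp u hu
        have hp' : p ∈ Submodule.span K (↑T : Set A) := hPT hp
        refine Submodule.span_induction (p := fun x _ => x * u ∈ E) ?_ ?_ ?_ ?_ hp'
        · intro y hy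
          show y * u ∈ E
          have hys : y ∈ sset := hTsub hy
          obtain ⟨hA1, hB1, hab⟩ := hfact' y hys
          have hbu : fB y * u ∈ Z := hUU _ hB1 u hu
          have hau : fA y * u ∈ Z := hUU _ hA1 u hu
          have hamem : fA y ∈ (↑S : Set A) := by
            simp only [hS, Finset.coe_union, Set.mem_union, Finset.coe_image, Set.mem_image,
              Finset.mem_coe]
            exact Or.inl ⟨y, Finset.mem_coe.mp hy, rfl⟩
          have hbmem : fB y ∈ (↑S : Set A) := by
            simp only [hS, Finset.coe_union, Set.mem_union, Finset.coe_image, Set.mem_image,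
              Finset.mem_coe]
            exact Or.inr ⟨y, Finset.mem_coe.mp hy, rfl⟩
          have hstar := hstar1 (fA y) hA1 (fB y) hB1 u hu
          rw [hab] at hstar
          have hstep : y * u = -((fB y * u) * fA y) - ((fA y * u) * fB y) := by
            linear_combination (norm := module) hstar - mul_comm (fA y) (fB y * u)
              - mul_comm (fB y) (fA y * u) + mul_comm y u
          rw [hstep]
          exact Submodule.sub_mem _
            (Submodule.neg_mem _ (mul_mem_pmul hbu (Submodule.subset_span hamem)))
            (mul_mem_pmul hau (Submodule.subset_span hbmem))
        · show (0:A) * u ∈ E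
          rw [zero_mul]; exact Submodule.zero_mem _
        · intro x y _ _ hcx hcy
          show (x + y) * u ∈ E
          rw [add_mul]; exact Submodule.add_mem _ hcx hcy
        · intro c x _ hcx
          show (c • x) * u ∈ E
          rw [smul_mul_assoc]; exact Submodule.smul_mem _ _ hcx
      have hPmul : ∀ a' ∈ U, ∀ b' ∈ U, a' * b' ∈ P := fun a' ha' b' hb' =>
        mul_mem_pmul ha' hb'
      have hGmul : ∀ z ∈ Z, ∀ w ∈ Z, z * w ∈ G := fun z hz w hw => mul_mem_pmul hz hw
      have hEF' : E ≤ F' := le_sup_left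
      have hGF' : G ≤ F' := le_sup_right
      clear_value D F' G E P S T fA fB
      clear hB hBmem htb1 htb2 hPspan hfact' hTsub hSU hspanSU hPT hfA hfB hT hS hsset hE hG
      clear tb fA fB T S B sset Zb hZb
      have hclosed : ∀ W : Submodule K A, W ≤ U → ∀ x ∈ W ⊔ D, ∀ y ∈ W ⊔ D,
          x * y ∈ W ⊔ D := by
        intro W hW x hx y hy
        have hrearr : W ⊔ D = (W ⊔ F') ⊔ P := by
          rw [hD, sup_comm P F', ← sup_assoc]
        have hVU : W ⊔ F' ≤ U := sup_le hW hF'U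
        have hle : ∀ a' ∈ (W ⊔ F') ⊔ P, ∀ b' ∈ (W ⊔ F') ⊔ P, a' * b' ∈ (W ⊔ F') ⊔ P := by
          intro a' ha' b' hb'
          rcases Submodule.mem_sup.mp ha' with ⟨v, hv, p, hp, rfl⟩
          rcases Submodule.mem_sup.mp hb' with ⟨v', hv', p', hp', rfl⟩
          have h1 : v * v' ∈ P := hPmul _ (hVU hv) _ (hVU hv')
          have hm2 : v * p' ∈ E := by rw [mul_comm]; exact hPUE _ hp' _ (hVU hv)
          have hm3 : p * v' ∈ E := hPUE _ hp _ (hVU hv')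
          have hm4 : p * p' ∈ G := hGmul _ (hPZ hp) _ (hPZ hp')
          have hexp : (v + p) * (v' + p') = v * v' + v * p' + (p * v' + p * p') := by
            rw [add_mul, mul_add, mul_add]
          rw [hexp]
          refine Submodule.add_mem _ (Submodule.add_mem _ ?_ ?_) (Submodule.add_mem _ ?_ ?_)
          · exact Submodule.mem_sup_right h1
          · exact Submodule.mem_sup_left (Submodule.mem_sup_right (hEF' hm2))
          · exact Submodule.mem_sup_left (Submodule.mem_sup_right (hEF' hm3))
          · exact Submodule.mem_sup_left (Submodule.mem_sup_right (hGF' hm4))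
        rw [hrearr] at hx hy ⊢
        exact hle x hx y hy
      have hpick : ∀ W : Submodule K A, W.FG → W ≤ U → ∃ x ∈ U, x ∉ W ⊔ D := by
        intro W hWfg hWU
        by_contra hcon
        push_neg at hcon
        have hle : U ≤ W ⊔ D := fun x hx => hcon x hx
        apply hUfg
        have h1 : (W ⊔ D) ⊓ U = U := inf_eq_right.mpr hle
        have hmod : (W ⊔ D) ⊓ U = W ⊔ (D ⊓ U) := sup_inf_assoc_of_le D hWU
        have hDU : D ⊓ U = F' := by
          rw [hD, sup_comm P F', sup_inf_assoc_of_le P hF'U]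
          have hPU : P ⊓ U = ⊥ := by
            refine eq_bot_iff.mpr fun x hx => ?_
            rw [Submodule.mem_bot]
            exact hUZ0 x (Submodule.mem_inf.mp hx).2 (hPZ (Submodule.mem_inf.mp hx).1)
          rw [hPU, sup_bot_eq]
        have hUW : U = W ⊔ F' := by rw [← h1, hmod, hDU]
        rw [hUW]
        exact hWfg.sup hF'fg
      have hωD : ∀ x ∈ D, ω x = 0 := by
        intro x hx
        rw [hD] at hx
        rcases Submodule.mem_sup.mp hx with ⟨p, hp, f', hf', rfl⟩
        rw [map_add, ((hZmem p).mp (hPZ hp)).1, ((hUmem f').mp (hF'U hf')).1, add_zero]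
      exact chain_exists ω U D (fun x hx => ((hUmem x).mp hx).1) hωD hclosed hpick
  · -- Case 1 : Z infinite
    set Mseq : ℕ → Submodule K A :=
      fun k => Nat.rec (pmul Z Z) (fun _ p => p ⊔ pmul Z p) k with hMseqdef
    have hM0 : Mseq 0 = pmul Z Z := rfl
    have hMsucc : ∀ k, Mseq (k+1) = Mseq k ⊔ pmul Z (Mseq k) := fun _ => rfl
    have hMU : ∀ k, Mseq k ≤ U := by
      intro k; induction k with
      | zero => rw [hM0]; exact pmul_le hZZ
      | succ k ih =>
        rw [hMsucc]
        refine sup_le ih (pmul_le fun z hz m hm => ?_)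
        rw [mul_comm]
        exact hUZ m (ih hm) z hz
    have hMann : ∀ k, ∀ m ∈ Mseq k, ∀ u ∈ U, m * u = 0 := by
      intro k; induction k with
      | zero =>
        intro m hm
        rw [hM0] at hm
        refine pmul_induction (C := fun y => ∀ u ∈ U, y * u = 0) hm ?_ ?_ ?_ ?_
        · intro zz hz ww hw u hu
          rw [mul_comm]
          exact hstar3 u hu zz hz ww hw
        · intro u _; exact zero_mul u
        · intro a' b' hca hcb u hu; rw [add_mul, hca u hu, hcb u hu, add_zero]
        · intro c x hcx u hu; rw [smul_mul_assoc, hcx u hu, smul_zero]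
      | succ k ih =>
        intro m hm u hu
        rw [hMsucc] at hm
        rcases Submodule.mem_sup.mp hm with ⟨m1, hm1, m2, hm2, rfl⟩
        have h1 : m1 * u = 0 := ih m1 hm1 u hu
        have hmm : m2 * u = 0 := by
          refine pmul_induction (C := fun y => y * u = 0) hm2 ?_ (zero_mul u) ?_ ?_
          · intro z hz m' hm'
            have hm'U : m' ∈ U := hMU k hm'
            have hs := hstar2 u hu m' hm'U z hz
            have h0 : m' * (u * z) = 0 := ih m' hm' _ (hUZ u hu z hz)
            rw [h0, add_zero] at hs
            rw [mul_comm z m', mul_comm (m' * z) u]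
            exact hs
          · intro a' b' hca hcb; rw [add_mul, hca, hcb, add_zero]
          · intro c x hcx; rw [smul_mul_assoc, hcx, smul_zero]
        rw [add_mul, h1, hmm, add_zero]
    have hMseqMono : Monotone Mseq :=
      monotone_nat_of_le_succ (fun k => by rw [hMsucc]; exact le_sup_left)
    set Mt : Submodule K A := ⨆ k, Mseq k with hMtdef
    have hMtmem : ∀ x : A, x ∈ Mt ↔ ∃ k, x ∈ Mseq k := fun x =>
      Submodule.mem_iSup_of_chain ⟨Mseq, hMseqMono⟩ x
    have hMtU : Mt ≤ U := iSup_le hMU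
    have hMmulZZ : ∀ z ∈ Z, ∀ w ∈ Z, z * w ∈ Mseq 0 := by
      intro z hz w hw; rw [hM0]; exact mul_mem_pmul hz hw
    have hMmulZM : ∀ k, ∀ z ∈ Z, ∀ m ∈ Mseq k, z * m ∈ Mseq (k+1) := by
      intro k z hz m hm; rw [hMsucc]
      exact Submodule.mem_sup_right (mul_mem_pmul hz hm)
    clear_value Mt Mseq
    have hclosed : ∀ W : Submodule K A, W ≤ Z → ∀ x ∈ W ⊔ Mt, ∀ y ∈ W ⊔ Mt,
        x * y ∈ W ⊔ Mt := by
      intro W hW x hx y hy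
      have hle : pmul (W ⊔ Mt) (W ⊔ Mt) ≤ W ⊔ Mt := by
        rw [pmul_sup_left, pmul_sup_right, pmul_sup_right]
        refine sup_le (sup_le ?_ ?_) (sup_le ?_ ?_)
        · refine pmul_le fun a' ha' b' hb' => Submodule.mem_sup_right ?_
          exact (hMtmem _).mpr ⟨0, hMmulZZ _ (hW ha') _ (hW hb')⟩
        · refine pmul_le fun a' ha' m hm => Submodule.mem_sup_right ?_
          rcases (hMtmem m).mp hm with ⟨k, hk⟩
          exact (hMtmem _).mpr ⟨k+1, hMmulZM k _ (hW ha') _ hk⟩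
        · refine pmul_le fun m hm a' ha' => Submodule.mem_sup_right ?_
          rcases (hMtmem m).mp hm with ⟨k, hk⟩
          refine (hMtmem _).mpr ⟨k+1, ?_⟩
          rw [mul_comm]
          exact hMmulZM k _ (hW ha') _ hk
        · refine pmul_le fun m hm m' hm' => ?_
          have hz : m * m' = 0 := by
            rcases (hMtmem m).mp hm with ⟨k, hk⟩
            exact hMann k m hk m' (hMtU hm')
          rw [hz]; exact Submodule.zero_mem _
      exact hle (mul_mem_pmul hx hy)
    have hpick : ∀ W : Submodule K A, W.FG → W ≤ Z → ∃ x ∈ Z, x ∉ W ⊔ Mt := by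
      intro W hWfg hWZ
      by_contra hcon
      push_neg at hcon
      have hle : Z ≤ W ⊔ Mt := fun x hx => hcon x hx
      apply hZfg
      have hmod : (W ⊔ Mt) ⊓ Z = W ⊔ (Mt ⊓ Z) := sup_inf_assoc_of_le Mt hWZ
      have hMtZ : Mt ⊓ Z = ⊥ := by
        refine eq_bot_iff.mpr fun x hx => ?_
        rw [Submodule.mem_bot]
        exact hUZ0 x (hMtU (Submodule.mem_inf.mp hx).1) (Submodule.mem_inf.mp hx).2
      have h1 : (W ⊔ Mt) ⊓ Z = Z := inf_eq_right.mpr hle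
      rw [hmod, hMtZ, sup_bot_eq] at h1
      rw [← h1]
      exact hWfg
    exact chain_exists ω Z Mt (fun x hx => ((hZmem x).mp hx).1)
      (fun x hx => ((hUmem x).mp (hMtU hx)).1) hclosed hpick



end BernsteinACC

/-- Let `A` be a Bernstein algebra over a field `K` of characteristic `≠ 2, 3`,
with weight function `ω` and barideal `N = ker ω`.  The following are equivalent:
(i) `A` satisfies the ascending chain condition on subalgebras;
(ii) `A` satisfies the ascending chain condition on subalgebras contained in `N`;
(iii) `A` is finite-dimensional over `K`. -/
theorem bernstein_acc_subalgebras {K A : Type*} [Field K]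
    [NonUnitalNonAssocCommRing A] [Module K A] [SMulCommClass K A A] [IsScalarTower K A A]
    (h2 : (2 : K) ≠ 0) (h3 : (3 : K) ≠ 0)
    (ω : A →ₗ[K] K) (hωmul : ∀ x y : A, ω (x * y) = ω x * ω y) (hω0 : ω ≠ 0)
    (hbern : ∀ x : A, (x * x) * (x * x) = ω x ^ 2 • (x * x)) :
    List.TFAE
      [ -- (i) a.c.c. on subalgebras
        ∀ f : ℕ → NonUnitalSubalgebra K A, Monotone f → ∃ n, ∀ m, n ≤ m → f m = f n,
        -- (ii) a.c.c. on subalgebras contained in N = ker ω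
        ∀ f : ℕ → NonUnitalSubalgebra K A, (∀ k, ∀ x ∈ f k, ω x = 0) → Monotone f →
          ∃ n, ∀ m, n ≤ m → f m = f n,
        -- (iii) finite-dimensionality
        FiniteDimensional K A ] := by
  tfae_have 1 → 2 := fun h f _ hm => h f hm
  tfae_have 3 → 1 := by
    intro hfd f hmono
    haveI := hfd
    have hmono' : Monotone fun n => (f n).toSubmodule := by
      intro i j hij
      refine SetLike.le_def.mpr fun x hx => ?_
      rw [NonUnitalSubalgebra.mem_toSubmodule] at hx ⊢
      exact hmono hij hx
    obtain ⟨n, hn⟩ :=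
      monotone_stabilizes_iff_noetherian.mpr inferInstance ⟨fun n => (f n).toSubmodule, hmono'⟩
    refine ⟨n, fun m hm => ?_⟩
    have h1 := hn m hm
    apply SetLike.ext
    intro x
    rw [← NonUnitalSubalgebra.mem_toSubmodule, ← NonUnitalSubalgebra.mem_toSubmodule]
    exact (congrArg (x ∈ ·) h1.symm).to_iff
  tfae_have 2 → 3 := by
    intro h
    by_contra hnfd
    have hinf : ¬ (⊤ : Submodule K A).FG := fun hfg => hnfd (Module.finite_def.mpr hfg)
    obtain ⟨f, hω, hmono, hne⟩ :=
      BernsteinACC.infinite_chain h2 h3 ω hωmul hω0 hbern hinf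
    obtain ⟨n, hn⟩ := h f hω hmono
    exact hne n (hn (n + 1) (Nat.le_succ n))
  tfae_finish
end

section
/- Let A be a Bernstein algebra over a field K of characteristic ≠ 2, 3, with weight function ω and barideal N = ker(ω). The following are equivalent: (i) A satisfies the descending chain condition on subalgebras; (ii) A satisfies the descending chain condition on subalgebras contained in N; (iii) A is finite-dimensional over K. -/
set_option linter.unusedSectionVars false

namespace BernsteinDCC

variable {K A : Type*} [Field K]
    [NonUnitalNonAssocCommRing A] [Module K A] [SMulCommClass K A A] [IsScalarTower K A A]

theorem smul_cancel {c : K} (hc : c ≠ 0) {x y : A} (h : c • x = c • y) : x = y := by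
  have := congrArg (fun z => c⁻¹ • z) h
  simpa [inv_smul_smul₀ hc] using this

theorem smul_cancel₀ {c : K} (hc : c ≠ 0) {x : A} (h : c • x = 0) : x = 0 := by
  apply smul_cancel hc; simpa using h

theorem sq2 (x y : A) (a : K) :
    (x + a • y) * (x + a • y) = x * x + (2*a) • (x*y) + (a*a) • (y*y) := by
  simp only [mul_add, add_mul, smul_mul_assoc, mul_smul_comm, mul_comm y x]
  module

theorem sq3 (x y z : A) (a b : K) :
    (x + a • y + b • z) * (x + a • y + b • z) =
      x*x + (2*a) • (x*y) + (2*b) • (x*z) + (a*a) • (y*y)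
        + (2*(a*b)) • (y*z) + (b*b) • (z*z) := by
  simp only [mul_add, add_mul, smul_mul_assoc, mul_smul_comm, mul_comm y x, mul_comm z x,
    mul_comm z y]
  module

section Identities

variable (h2 : (2:K) ≠ 0) (h3 : (3:K) ≠ 0)
variable (ω : A →ₗ[K] K) (hωmul : ∀ x y : A, ω (x * y) = ω x * ω y)
variable (hbern : ∀ x : A, (x * x) * (x * x) = ω x ^ 2 • (x * x))
variable (e : A) (he : e * e = e) (hωe : ω e = 1)

include hbern he hωe in
theorem Et {n : A} (hn : ω n = 0) (t : K) :
    e + (2*(2*t)) • (e*(e*n)) + (2*((2*t)*(t*t))) • ((e*n)*(n*n))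
      + ((2*t)*(2*t)) • ((e*n)*(e*n)) + (2*(t*t)) • (e*(n*n))
      + ((t*t)*(t*t)) • ((n*n)*(n*n))
    = e + (2*t) • (e*n) + (t*t) • (n*n) := by
  have h1 : (e + t • n) * (e + t • n) = e + (2*t) • (e*n) + (t*t) • (n*n) := by
    rw [sq2]; rw [he]
  have hb := hbern (e + t • n)
  rw [h1] at hb
  rw [sq3] at hb
  rw [he] at hb
  have hω : ω (e + t • n) = 1 := by
    simp [map_add, map_smul, hωe, hn]
  rw [hω, one_pow, one_smul] at hb
  calc _ = e + (2*(2*t)) • (e*(e*n)) + (2*(t*t)) • (e*(n*n)) + ((2*t)*(2*t)) • ((e*n)*(e*n))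
        + (2*((2*t)*(t*t))) • ((e*n)*(n*n)) + ((t*t)*(t*t)) • ((n*n)*(n*n)) := by module
    _ = _ := hb

include h2 h3 hbern he hωe in
theorem coeffs {n : A} (hn : ω n = 0) :
    ((2:K) • (e*(e*n)) = e*n)
    ∧ ((4:K) • ((e*n)*(e*n)) + (2:K) • (e*(n*n)) = n*n)
    ∧ ((e*n)*(n*n) = 0) := by
  set c1 : A := (4:K) • (e*(e*n)) - (2:K) • (e*n) with hc1
  set c2 : A := (4:K) • ((e*n)*(e*n)) + (2:K) • (e*(n*n)) - n*n with hc2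
  set c3 : A := (4:K) • ((e*n)*(n*n)) with hc3
  set c4 : A := (n*n)*(n*n) with hc4
  have h : ∀ t : K, t • c1 + (t*t) • c2 + (t*t*t) • c3 + ((t*t)*(t*t)) • c4 = 0 := by
    intro t
    have hb := Et ω hbern e he hωe hn t
    have key : t • c1 + (t*t) • c2 + (t*t*t) • c3 + ((t*t)*(t*t)) • c4 =
        (e + (2*(2*t)) • (e*(e*n)) + (2*((2*t)*(t*t))) • ((e*n)*(n*n))
          + ((2*t)*(2*t)) • ((e*n)*(e*n)) + (2*(t*t)) • (e*(n*n))
          + ((t*t)*(t*t)) • ((n*n)*(n*n)))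
        - (e + (2*t) • (e*n) + (t*t) • (n*n)) := by
      rw [hc1, hc2, hc3, hc4]; module
    rw [hb, sub_self] at key
    exact key
  have E1 := h 1
  have Em1 := h (-1)
  have E2 := h 2
  have Em2 := h (-2)
  have h24 : (24:K) ≠ 0 := by
    have h24' : (24:K) = 2*2*2*3 := by norm_num
    rw [h24']; exact mul_ne_zero (mul_ne_zero (mul_ne_zero h2 h2) h2) h3
  have h12 : (12:K) ≠ 0 := by
    have h12' : (12:K) = 2*2*3 := by norm_num
    rw [h12']; exact mul_ne_zero (mul_ne_zero h2 h2) h3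
  have hc4z : c4 = 0 := by
    apply smul_cancel₀ h24
    have key : (24:K) • c4 =
        (-4:K) • ((1:K) • c1 + ((1:K)*(1:K)) • c2 + ((1:K)*(1:K)*(1:K)) • c3 + (((1:K)*(1:K))*((1:K)*(1:K))) • c4)
        + (-4:K) • ((-1:K) • c1 + ((-1:K)*(-1:K)) • c2 + ((-1:K)*(-1:K)*(-1:K)) • c3 + (((-1:K)*(-1:K))*((-1:K)*(-1:K))) • c4)
        + ((2:K) • c1 + ((2:K)*(2:K)) • c2 + ((2:K)*(2:K)*(2:K)) • c3 + (((2:K)*(2:K))*((2:K)*(2:K))) • c4)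
        + ((-2:K) • c1 + ((-2:K)*(-2:K)) • c2 + ((-2:K)*(-2:K)*(-2:K)) • c3 + (((-2:K)*(-2:K))*((-2:K)*(-2:K))) • c4) := by
      module
    rw [E1, Em1, E2, Em2] at key
    simpa using key
  have hc3z : c3 = 0 := by
    apply smul_cancel₀ h12
    have key : (12:K) • c3 =
        (-2:K) • ((1:K) • c1 + ((1:K)*(1:K)) • c2 + ((1:K)*(1:K)*(1:K)) • c3 + (((1:K)*(1:K))*((1:K)*(1:K))) • c4)
        + (2:K) • ((-1:K) • c1 + ((-1:K)*(-1:K)) • c2 + ((-1:K)*(-1:K)*(-1:K)) • c3 + (((-1:K)*(-1:K))*((-1:K)*(-1:K))) • c4)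
        + ((2:K) • c1 + ((2:K)*(2:K)) • c2 + ((2:K)*(2:K)*(2:K)) • c3 + (((2:K)*(2:K))*((2:K)*(2:K))) • c4)
        + (-1:K) • ((-2:K) • c1 + ((-2:K)*(-2:K)) • c2 + ((-2:K)*(-2:K)*(-2:K)) • c3 + (((-2:K)*(-2:K))*((-2:K)*(-2:K))) • c4) := by
      module
    rw [E1, Em1, E2, Em2] at key
    simpa using key
  have hc2z : c2 = 0 := by
    apply smul_cancel₀ h2
    have key : (2:K) • c2 =
        ((1:K) • c1 + ((1:K)*(1:K)) • c2 + ((1:K)*(1:K)*(1:K)) • c3 + (((1:K)*(1:K))*((1:K)*(1:K))) • c4)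
        + ((-1:K) • c1 + ((-1:K)*(-1:K)) • c2 + ((-1:K)*(-1:K)*(-1:K)) • c3 + (((-1:K)*(-1:K))*((-1:K)*(-1:K))) • c4)
        + (-2:K) • c4 := by module
    rw [E1, Em1, hc4z] at key
    simpa using key
  have hc1z : c1 = 0 := by
    apply smul_cancel₀ h2
    have key : (2:K) • c1 =
        ((1:K) • c1 + ((1:K)*(1:K)) • c2 + ((1:K)*(1:K)*(1:K)) • c3 + (((1:K)*(1:K))*((1:K)*(1:K))) • c4)
        - ((-1:K) • c1 + ((-1:K)*(-1:K)) • c2 + ((-1:K)*(-1:K)*(-1:K)) • c3 + (((-1:K)*(-1:K))*((-1:K)*(-1:K))) • c4)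
        - (2:K) • c3 := by module
    rw [E1, Em1, hc3z] at key
    simpa using key
  refine ⟨?_, ?_, ?_⟩
  · have k1 : (4:K) • (e*(e*n)) - (2:K) • (e*n) = 0 := by rw [← hc1]; exact hc1z
    apply smul_cancel h2
    calc (2:K) • ((2:K) • (e*(e*n))) = (4:K) • (e*(e*n)) := by module
      _ = (2:K) • (e*n) := sub_eq_zero.mp k1
  · have k2 : (4:K) • ((e*n)*(e*n)) + (2:K) • (e*(n*n)) - n*n = 0 := by rw [← hc2]; exact hc2z
    exact sub_eq_zero.mp k2
  · have k3 : (4:K) • ((e*n)*(n*n)) = 0 := by rw [← hc3]; exact hc3z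
    have h4 : (4:K) ≠ 0 := by
      have : (4:K) = 2*2 := by norm_num
      rw [this]; exact mul_ne_zero h2 h2
    exact smul_cancel₀ h4 k3

include h2 h3 hbern he hωe in
theorem idL1 {n : A} (hn : ω n = 0) : (2:K) • (e*(e*n)) = e*n :=
  (coeffs h2 h3 ω hbern e he hωe hn).1

include h2 h3 hbern he hωe in
theorem idQ {n : A} (hn : ω n = 0) :
    (4:K) • ((e*n)*(e*n)) + (2:K) • (e*(n*n)) = n*n :=
  (coeffs h2 h3 ω hbern e he hωe hn).2.1

include h2 h3 hbern he hωe in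
theorem idC {n : A} (hn : ω n = 0) : (e*n)*(n*n) = 0 :=
  (coeffs h2 h3 ω hbern e he hωe hn).2.2

include h2 h3 hbern he hωe in
theorem idL2 {n m : A} (hn : ω n = 0) (hm : ω m = 0) :
    (4:K) • ((e*n)*(e*m)) + (2:K) • (e*(n*m)) = n*m := by
  have hnm : ω (n+m) = 0 := by simp [hn, hm]
  have z1 := sub_eq_zero_of_eq (idQ h2 h3 ω hbern e he hωe hnm)
  have z2 := sub_eq_zero_of_eq (idQ h2 h3 ω hbern e he hωe hn)
  have z3 := sub_eq_zero_of_eq (idQ h2 h3 ω hbern e he hωe hm)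
  have key : (2:K) • ((4:K) • ((e*n)*(e*m)) + (2:K) • (e*(n*m))) - (2:K) • (n*m)
      = ((4:K) • ((e*(n+m))*(e*(n+m))) + (2:K) • (e*((n+m)*(n+m))) - (n+m)*(n+m))
        - ((4:K) • ((e*n)*(e*n)) + (2:K) • (e*(n*n)) - n*n)
        - ((4:K) • ((e*m)*(e*m)) + (2:K) • (e*(m*m)) - m*m) := by
    simp only [mul_add, add_mul, mul_comm m n, mul_comm (e*m) (e*n)]
    module
  rw [z1, z2, z3] at key
  have key2 : (2:K) • ((4:K) • ((e*n)*(e*m)) + (2:K) • (e*(n*m))) - (2:K) • (n*m) = 0 := by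
    rw [key]; abel
  exact smul_cancel h2 (sub_eq_zero.mp key2)

include h2 h3 hbern he hωe in
theorem idS1 {n m : A} (hn : ω n = 0) (hm : ω m = 0) :
    (2:K) • ((e*n)*(n*m)) + (e*m)*(n*n) = 0 := by
  have hp : ω (n+m) = 0 := by simp [hn, hm]
  have hq : ω (n-m) = 0 := by simp [hn, hm]
  have z1 := idC h2 h3 ω hbern e he hωe hp
  have z2 := idC h2 h3 ω hbern e he hωe hq
  have z4 := idC h2 h3 ω hbern e he hωe hm
  have key : (2:K) • ((2:K) • ((e*n)*(n*m)) + (e*m)*(n*n))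
      = ((e*(n+m))*((n+m)*(n+m))) - ((e*(n-m))*((n-m)*(n-m))) - (2:K) • ((e*m)*(m*m)) := by
    simp only [mul_add, add_mul, mul_sub, sub_mul, mul_comm m n]
    module
  rw [z1, z2, z4] at key
  have key2 : (2:K) • ((2:K) • ((e*n)*(n*m)) + (e*m)*(n*n)) = 0 := by
    rw [key]; simp
  exact smul_cancel₀ h2 key2

include h2 h3 hbern he hωe in
theorem idL3 {n m p : A} (hn : ω n = 0) (hm : ω m = 0) (hp : ω p = 0) :
    (e*n)*(m*p) + (e*m)*(n*p) + (e*p)*(n*m) = 0 := by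
  have hnp : ω (n+p) = 0 := by simp [hn, hp]
  have z1 := sub_eq_zero_of_eq (idS1 h2 h3 ω hbern e he hωe hnp hm)
  have z2 := sub_eq_zero_of_eq (idS1 h2 h3 ω hbern e he hωe hn hm)
  have z3 := sub_eq_zero_of_eq (idS1 h2 h3 ω hbern e he hωe hp hm)
  have key : (2:K) • ((e*n)*(m*p) + (e*m)*(n*p) + (e*p)*(n*m))
      = (((2:K) • ((e*(n+p))*((n+p)*m)) + (e*m)*((n+p)*(n+p))) - 0)
        - (((2:K) • ((e*n)*(n*m)) + (e*m)*(n*n)) - 0)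
        - (((2:K) • ((e*p)*(p*m)) + (e*m)*(p*p)) - 0) := by
    simp only [mul_add, add_mul, sub_zero, mul_comm m n, mul_comm m p, mul_comm p n]
    module
  rw [z1, z2, z3] at key
  have key2 : (2:K) • ((e*n)*(m*p) + (e*m)*(n*p) + (e*p)*(n*m)) = 0 := by
    rw [key]; abel
  exact smul_cancel₀ h2 key2

include hbern in
theorem sq_sq_zero {n : A} (hn : ω n = 0) : (n*n)*(n*n) = 0 := by
  have := hbern n
  rw [hn] at this
  simpa using this

include h2 hbern in
theorem idQ4 {n m : A} (hn : ω n = 0) (hm : ω m = 0) :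
    (2:K) • ((n*m)*(n*m)) + (n*n)*(m*m) = 0 := by
  have z1 := sq_sq_zero ω hbern (show ω (n+m) = 0 by simp [hn, hm])
  have z2 := sq_sq_zero ω hbern (show ω (n-m) = 0 by simp [hn, hm])
  have z3 := sq_sq_zero ω hbern hn
  have z4 := sq_sq_zero ω hbern hm
  have key : (4:K) • ((2:K) • ((n*m)*(n*m)) + (n*n)*(m*m))
      = (((n+m)*(n+m))*((n+m)*(n+m))) + (((n-m)*(n-m))*((n-m)*(n-m)))
        - (2:K) • ((n*n)*(n*n)) - (2:K) • ((m*m)*(m*m)) := by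
    simp only [mul_add, add_mul, mul_sub, sub_mul, mul_comm m n, mul_comm (n*m) (n*n),
      mul_comm (m*m) (n*n), mul_comm (m*m) (n*m)]
    module
  rw [z1, z2, z3, z4] at key
  have h4 : (4:K) ≠ 0 := by
    have : (4:K) = 2*2 := by norm_num
    rw [this]; exact mul_ne_zero h2 h2
  apply smul_cancel₀ h4
  rw [key]; simp

include h2 hbern in
theorem idR {n m p : A} (hn : ω n = 0) (hm : ω m = 0) (hp : ω p = 0) :
    (2:K) • ((n*m)*(n*p)) + (n*n)*(m*p) = 0 := by
  have z1 := idQ4 h2 ω hbern hn (show ω (m+p) = 0 by simp [hm, hp])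
  have z2 := idQ4 h2 ω hbern hn hm
  have z3 := idQ4 h2 ω hbern hn hp
  have key : (2:K) • ((2:K) • ((n*m)*(n*p)) + (n*n)*(m*p))
      = ((2:K) • ((n*(m+p))*(n*(m+p))) + (n*n)*((m+p)*(m+p)))
        - ((2:K) • ((n*m)*(n*m)) + (n*n)*(m*m))
        - ((2:K) • ((n*p)*(n*p)) + (n*n)*(p*p)) := by
    simp only [mul_add, add_mul, mul_comm p m, mul_comm (n*p) (n*m)]
    module
  rw [z1, z2, z3] at key
  have key2 : (2:K) • ((2:K) • ((n*m)*(n*p)) + (n*n)*(m*p)) = 0 := by rw [key]; abel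
  exact smul_cancel₀ h2 key2

include h2 hbern in
theorem idL4 {n m p q : A} (hn : ω n = 0) (hm : ω m = 0) (hp : ω p = 0) (hq : ω q = 0) :
    (n*m)*(q*p) + (q*m)*(n*p) + (n*q)*(m*p) = 0 := by
  have z1 := sub_eq_zero_of_eq (idR h2 ω hbern (show ω (n+q) = 0 by simp [hn, hq]) hm hp)
  have z2 := sub_eq_zero_of_eq (idR h2 ω hbern hn hm hp)
  have z3 := sub_eq_zero_of_eq (idR h2 ω hbern hq hm hp)
  have key : (2:K) • ((n*m)*(q*p) + (q*m)*(n*p) + (n*q)*(m*p))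
      = (((2:K) • (((n+q)*m)*((n+q)*p)) + ((n+q)*(n+q))*(m*p)) - 0)
        - (((2:K) • ((n*m)*(n*p)) + (n*n)*(m*p)) - 0)
        - (((2:K) • ((q*m)*(q*p)) + (q*q)*(m*p)) - 0) := by
    simp only [mul_add, add_mul, sub_zero, mul_comm q n, mul_comm (q*m) (n*m),
      mul_comm (q*p) (n*p), mul_comm (q*m) (n*p), mul_comm (q*p) (n*m)]
    module
  rw [z1, z2, z3] at key
  have key2 : (2:K) • ((n*m)*(q*p) + (q*m)*(n*p) + (n*q)*(m*p)) = 0 := by rw [key]; abel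
  exact smul_cancel₀ h2 key2

end Identities

/-- the Peirce ½-eigenspace inside the barideal -/
def Up (ω : A →ₗ[K] K) (e : A) : Submodule K A where
  carrier := {x | ω x = 0 ∧ (2:K) • (e * x) = x}
  add_mem' := by
    rintro x y ⟨hx1, hx2⟩ ⟨hy1, hy2⟩
    refine ⟨by simp [hx1, hy1], ?_⟩
    rw [mul_add, smul_add, hx2, hy2]
  zero_mem' := by simp
  smul_mem' := by
    rintro c x ⟨hx1, hx2⟩
    refine ⟨by simp [hx1], ?_⟩
    rw [mul_smul_comm, smul_comm, hx2]

/-- the Peirce 0-eigenspace inside the barideal -/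
def Vp (ω : A →ₗ[K] K) (e : A) : Submodule K A where
  carrier := {x | ω x = 0 ∧ e * x = 0}
  add_mem' := by
    rintro x y ⟨hx1, hx2⟩ ⟨hy1, hy2⟩
    exact ⟨by simp [hx1, hy1], by rw [mul_add, hx2, hy2, add_zero]⟩
  zero_mem' := by simp
  smul_mem' := by
    rintro c x ⟨hx1, hx2⟩
    exact ⟨by simp [hx1], by rw [mul_smul_comm, hx2, smul_zero]⟩

theorem mem_Up {ω : A →ₗ[K] K} {e x : A} : x ∈ Up ω e ↔ ω x = 0 ∧ (2:K) • (e * x) = x :=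
  Iff.rfl

theorem mem_Vp {ω : A →ₗ[K] K} {e x : A} : x ∈ Vp ω e ↔ ω x = 0 ∧ e * x = 0 :=
  Iff.rfl

section Peirce

variable (h2 : (2:K) ≠ 0) (h3 : (3:K) ≠ 0)
variable (ω : A →ₗ[K] K) (hωmul : ∀ x y : A, ω (x * y) = ω x * ω y)
variable (hbern : ∀ x : A, (x * x) * (x * x) = ω x ^ 2 • (x * x))
variable (e : A) (he : e * e = e) (hωe : ω e = 1)

include h2 h3 hωmul hbern he hωe in
theorem pUU {u u' : A} (hu : u ∈ Up ω e) (hu' : u' ∈ Up ω e) : u * u' ∈ Vp ω e := by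
  refine ⟨by rw [hωmul, hu.1, hu'.1, mul_zero], ?_⟩
  have hL2 := idL2 h2 h3 ω hbern e he hωe hu.1 hu'.1
  have h4 : (4:K) • ((e*u)*(e*u')) = u * u' := by
    calc (4:K) • ((e*u)*(e*u')) = ((2:K) • (e*u)) * ((2:K) • (e*u')) := by
          rw [smul_mul_assoc, mul_smul_comm]; module
      _ = u * u' := by rw [hu.2, hu'.2]
  rw [h4] at hL2
  have : (2:K) • (e*(u*u')) = 0 := by
    have := add_left_cancel (a := u*u') (b := (2:K) • (e*(u*u'))) (c := 0) (by rw [hL2, add_zero])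
    exact this
  exact smul_cancel₀ h2 this

include h2 h3 hωmul hbern he hωe in
theorem pUV {u v : A} (hu : u ∈ Up ω e) (hv : v ∈ Vp ω e) : u * v ∈ Up ω e := by
  refine ⟨by rw [hωmul, hu.1, hv.1, mul_zero], ?_⟩
  have hL2 := idL2 h2 h3 ω hbern e he hωe hu.1 hv.1
  rw [hv.2, mul_zero, smul_zero, zero_add] at hL2
  exact hL2

include h2 h3 hωmul hbern he hωe in
theorem pVV {v v' : A} (hv : v ∈ Vp ω e) (hv' : v' ∈ Vp ω e) : v * v' ∈ Up ω e := by
  refine ⟨by rw [hωmul, hv.1, hv'.1, mul_zero], ?_⟩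
  have hL2 := idL2 h2 h3 ω hbern e he hωe hv.1 hv'.1
  rw [hv.2, zero_mul, smul_zero, zero_add] at hL2
  exact hL2

include h2 h3 hωmul hbern he hωe in
theorem idA {u v v' : A} (hu : u ∈ Up ω e) (hv : v ∈ Vp ω e) (hv' : v' ∈ Vp ω e) :
    u * (v * v') = 0 := by
  have hL3 := idL3 h2 h3 ω hbern e he hωe hu.1 hv.1 hv'.1
  rw [hv.2, hv'.2, zero_mul, zero_mul, add_zero, add_zero] at hL3
  calc u * (v*v') = ((2:K) • (e*u)) * (v*v') := by rw [hu.2]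
    _ = (2:K) • ((e*u)*(v*v')) := by rw [smul_mul_assoc]
    _ = 0 := by rw [hL3, smul_zero]

include h2 h3 hωmul hbern he hωe in
theorem idVVUU {u u' v v' : A} (hu : u ∈ Up ω e) (hu' : u' ∈ Up ω e)
    (hv : v ∈ Vp ω e) (hv' : v' ∈ Vp ω e) : (v * v') * (u * u') = 0 := by
  have hvv : ω (v * v') = 0 := by rw [hωmul, hv.1, hv'.1, mul_zero]
  have hL3 := idL3 h2 h3 ω hbern e he hωe hu.1 hu'.1 hvv
  rw [idA h2 h3 ω hωmul hbern e he hωe hu' hv hv',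
      idA h2 h3 ω hωmul hbern e he hωe hu hv hv',
      mul_zero, mul_zero, zero_add, zero_add] at hL3
  have hvvU := pVV h2 h3 ω hωmul hbern e he hωe hv hv'
  calc (v*v')*(u*u') = ((2:K) • (e*(v*v'))) * (u*u') := by rw [hvvU.2]
    _ = (2:K) • ((e*(v*v'))*(u*u')) := by rw [smul_mul_assoc]
    _ = 0 := by rw [hL3, smul_zero]

include h2 h3 hωmul hbern he hωe in
theorem idD1 {u u' v : A} (hu : u ∈ Up ω e) (hu' : u' ∈ Up ω e) (hv : v ∈ Vp ω e) :
    (u * v) * (u' * v) = 0 := by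
  have hL4 := idL4 h2 ω hbern hu.1 hv.1 hv.1 hu'.1
  rw [mul_comm (u'*v) (u*v)] at hL4
  have hz : (u*u')*(v*v) = 0 := by
    rw [mul_comm]
    exact idVVUU h2 h3 ω hωmul hbern e he hωe hu hu' hv hv
  rw [hz, add_zero] at hL4
  apply smul_cancel₀ h2
  rw [two_smul]
  exact hL4

include h2 h3 hωmul hbern he hωe in
theorem idD2 {u v v' : A} (hu : u ∈ Up ω e) (hv : v ∈ Vp ω e) (hv' : v' ∈ Vp ω e) :
    (u * v) * (u * v') = 0 := by
  have hL4 := idL4 h2 ω hbern hu.1 hv.1 hv'.1 hu.1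
  have hz : (u*u)*(v*v') = 0 := by
    rw [mul_comm]
    exact idVVUU h2 h3 ω hωmul hbern e he hωe hu hu hv hv'
  rw [hz, add_zero] at hL4
  apply smul_cancel₀ h2
  rw [two_smul]
  exact hL4

include h2 h3 hωmul hbern he hωe in
theorem decompU {n : A} (hn : ω n = 0) : (2:K) • (e * n) ∈ Up ω e := by
  refine ⟨by simp [hωmul e n, hn], ?_⟩
  rw [mul_smul_comm, smul_comm]
  rw [idL1 h2 h3 ω hbern e he hωe hn]

include h2 h3 hωmul hbern he hωe in
theorem decompV {n : A} (hn : ω n = 0) : n - (2:K) • (e * n) ∈ Vp ω e := by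
  refine ⟨by simp [hωmul e n, hn], ?_⟩
  rw [mul_sub, mul_smul_comm, idL1 h2 h3 ω hbern e he hωe hn, sub_self]

end Peirce

section Spans

def mSpan (S T : Submodule K A) : Submodule K A :=
  Submodule.span K {z | ∃ x ∈ S, ∃ y ∈ T, x * y = z}

theorem mul_mem_mSpan {S T : Submodule K A} {x y : A} (hx : x ∈ S) (hy : y ∈ T) :
    x * y ∈ mSpan S T :=
  Submodule.subset_span ⟨x, hx, y, hy, rfl⟩

theorem mSpan_le {S T C : Submodule K A} (h : ∀ x ∈ S, ∀ y ∈ T, x * y ∈ C) :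
    mSpan S T ≤ C := by
  rw [mSpan, Submodule.span_le]
  rintro z ⟨x, hx, y, hy, rfl⟩
  exact h x hx y hy

theorem mul_mSpan_mem {S T C : Submodule K A} {a : A}
    (h : ∀ x ∈ S, ∀ y ∈ T, a * (x * y) ∈ C) {b : A} (hb : b ∈ mSpan S T) : a * b ∈ C := by
  have hle : mSpan S T ≤ C.comap (LinearMap.mulLeft K a) :=
    mSpan_le (fun x hx y hy => h x hx y hy)
  exact hle hb

theorem mSpan_mul_mSpan_mem {S T S' T' C : Submodule K A}
    (h : ∀ x ∈ S, ∀ y ∈ T, ∀ x' ∈ S', ∀ y' ∈ T', (x*y)*(x'*y') ∈ C) :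
    ∀ a ∈ mSpan S T, ∀ b ∈ mSpan S' T', a * b ∈ C := by
  intro a ha b hb
  have h1 : ∀ x ∈ S, ∀ y ∈ T, (x*y) * b ∈ C := fun x hx y hy =>
    mul_mSpan_mem (h x hx y hy) hb
  have hle : mSpan S T ≤ C.comap (LinearMap.mulRight K b) := by
    apply mSpan_le
    intro x hx y hy
    exact h1 x hx y hy
  exact hle ha

theorem mSpan_le_ker {ω : A →ₗ[K] K} (hωmul : ∀ x y : A, ω (x * y) = ω x * ω y)
    {S T : Submodule K A} (hS : ∀ x ∈ S, ω x = 0) :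
    mSpan S T ≤ LinearMap.ker ω :=
  mSpan_le fun x hx y _ => LinearMap.mem_ker.2 (by rw [hωmul, hS x hx, zero_mul])

/-- left annihilator of a submodule -/
def lAnn (T : Submodule K A) : Submodule K A where
  carrier := {x | ∀ w ∈ T, x * w = 0}
  add_mem' := by
    intro x y hx hy w hw
    rw [add_mul, hx w hw, hy w hw, add_zero]
  zero_mem' := fun w _ => zero_mul w
  smul_mem' := by
    intro c x hx w hw
    rw [smul_mul_assoc, hx w hw, smul_zero]

theorem mem_lAnn {T : Submodule K A} {x : A} : x ∈ lAnn T ↔ ∀ w ∈ T, x * w = 0 :=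
  Iff.rfl

theorem fin_of_map_ker {S : Submodule K A} (f : A →ₗ[K] A)
    (h1 : FiniteDimensional K (S.map f))
    (h2 : FiniteDimensional K (S ⊓ LinearMap.ker f : Submodule K A)) :
    FiniteDimensional K S :=
  (Submodule.fg_iff_finiteDimensional S).mp
    (Submodule.fg_of_fg_map_of_fg_inf_ker f
      ((Submodule.fg_iff_finiteDimensional _).mpr h1)
      ((Submodule.fg_iff_finiteDimensional _).mpr h2))

end Spans

section Tool

variable (ω : A →ₗ[K] K)

theorem tool
    (hdcc : ∀ f : ℕ → NonUnitalSubalgebra K A, (∀ k, ∀ x ∈ f k, ω x = 0) → Antitone f →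
      ∃ n, ∀ m, n ≤ m → f m = f n)
    (W C : Submodule K A) (hWN : ∀ x ∈ W, ω x = 0) (hCW : C ≤ W)
    (hCfin : FiniteDimensional K C)
    (hmul : ∀ x ∈ W, ∀ y ∈ W, x * y ∈ C) : FiniteDimensional K W := by
  by_contra hinf
  set C' : Submodule K W := C.comap W.subtype with hC'def
  have hC'fin : FiniteDimensional K C' := by
    haveI := hCfin
    exact LinearEquiv.finiteDimensional (Submodule.comapSubtypeEquivOfLe hCW).symm
  have hQnf : ¬ FiniteDimensional K (W ⧸ C') := by
    intro hQ
    apply hinf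
    have h1 : ((⊤ : Submodule K W).map C'.mkQ).FG := by
      rw [Submodule.map_top, Submodule.range_mkQ]
      exact Module.finite_def.mp hQ
    have h2 : ((⊤ : Submodule K W) ⊓ LinearMap.ker C'.mkQ).FG := by
      rw [top_inf_eq, Submodule.ker_mkQ]
      exact (Submodule.fg_iff_finiteDimensional C').mpr hC'fin
    have := Submodule.fg_of_fg_map_of_fg_inf_ker C'.mkQ h1 h2
    exact Module.finite_def.mpr this
  have hbi : Infinite (Module.Basis.ofVectorSpaceIndex K (W ⧸ C')) := by
    by_contra hfin
    rw [not_infinite_iff_finite] at hfin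
    exact hQnf (Module.Finite.of_basis (Module.Basis.ofVectorSpace K (W ⧸ C')))
  set b := Module.Basis.ofVectorSpace K (W ⧸ C') with hbdef
  set g := Infinite.natEmbedding (Module.Basis.ofVectorSpaceIndex K (W ⧸ C')) with hgdef
  set D : ℕ → Submodule K (W ⧸ C') :=
    fun k => Submodule.span K (b '' (g '' {j | k ≤ j})) with hDdef
  have hDanti : Antitone D := by
    intro k l hkl
    apply Submodule.span_mono
    apply Set.image_mono
    apply Set.image_mono
    intro j hj
    exact le_trans hkl hj
  have hmemD : ∀ k, b (g k) ∈ D k := fun k =>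
    Submodule.subset_span ⟨g k, ⟨k, le_refl k, rfl⟩, rfl⟩
  have hnotD : ∀ k, b (g k) ∉ D (k+1) := by
    intro k hk
    have hno : g k ∉ g '' {j | k+1 ≤ j} := by
      rintro ⟨j, hj, hgj⟩
      have hj' : k + 1 ≤ j := hj
      have := g.injective hgj
      omega
    exact (b.linearIndependent.notMem_span_image hno) hk
  set E : ℕ → Submodule K W := fun k => (D k).comap C'.mkQ with hEdef
  set F : ℕ → Submodule K A := fun k => (E k).map W.subtype with hFdef
  have hFW : ∀ k, F k ≤ W := fun k => Submodule.map_subtype_le _ _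
  have hCF : ∀ k, C ≤ F k := by
    intro k x hx
    refine ⟨⟨x, hCW hx⟩, ?_, rfl⟩
    have hx' : (⟨x, hCW hx⟩ : W) ∈ C' := hx
    show C'.mkQ ⟨x, hCW hx⟩ ∈ D k
    rw [Submodule.mkQ_apply, (Submodule.Quotient.mk_eq_zero C').mpr hx']
    exact (D k).zero_mem
  set G : ℕ → NonUnitalSubalgebra K A := fun k =>
    { F k with
      mul_mem' := fun {x y} hx hy => hCF k (hmul x (hFW k hx) y (hFW k hy)) } with hGdef
  have hGanti : Antitone G := by
    intro k l hkl x hx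
    exact Submodule.map_mono (Submodule.comap_mono (hDanti hkl)) hx
  have hGN : ∀ k, ∀ x ∈ G k, ω x = 0 := fun k x hx => hWN x (hFW k hx)
  obtain ⟨n, hn⟩ := hdcc G hGN hGanti
  have hFeq : F (n+1) = F n :=
    congrArg NonUnitalSubalgebra.toSubmodule (hn (n+1) (Nat.le_succ n))
  have hEeq : E (n+1) = E n :=
    Submodule.map_injective_of_injective W.injective_subtype hFeq
  have hDeq : D (n+1) = D n := by
    have hs := Submodule.mkQ_surjective C'
    have h1 : (E (n+1)).map C'.mkQ = D (n+1) := Submodule.map_comap_eq_of_surjective hs _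
    have h2 : (E n).map C'.mkQ = D n := Submodule.map_comap_eq_of_surjective hs _
    rw [← h1, ← h2, hEeq]
  exact hnotD n (hDeq ▸ hmemD n)

end Tool

section Main

variable (h2 : (2:K) ≠ 0) (h3 : (3:K) ≠ 0)
variable (ω : A →ₗ[K] K) (hωmul : ∀ x y : A, ω (x * y) = ω x * ω y) (hω0 : ω ≠ 0)
variable (hbern : ∀ x : A, (x * x) * (x * x) = ω x ^ 2 • (x * x))

include h2 h3 hωmul hω0 hbern in
theorem findim_of_dcc
    (hdcc : ∀ f : ℕ → NonUnitalSubalgebra K A, (∀ k, ∀ x ∈ f k, ω x = 0) → Antitone f →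
      ∃ n, ∀ m, n ≤ m → f m = f n) :
    FiniteDimensional K A := by
  classical
  -- an idempotent of weight 1
  obtain ⟨y, hy⟩ : ∃ y, ω y ≠ 0 := by
    by_contra h
    push_neg at h
    exact hω0 (LinearMap.ext fun x => h x)
  set a : A := (ω y)⁻¹ • y with hadef
  have hωa : ω a = 1 := by
    rw [hadef, map_smul, smul_eq_mul, inv_mul_cancel₀ hy]
  set e : A := a * a with hedef
  have hωe : ω e = 1 := by rw [hedef, hωmul, hωa, one_mul]
  have he : e * e = e := by
    have := hbern a
    rw [hωa, one_pow, one_smul] at this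
    exact this
  set U : Submodule K A := Up ω e with hUdef
  set V : Submodule K A := Vp ω e with hVdef
  have hUN : ∀ x ∈ U, ω x = 0 := fun x hx => hx.1
  have hVN : ∀ x ∈ V, ω x = 0 := fun x hx => hx.1
  -- V·V has zero multiplication
  have hVVU : mSpan V V ≤ U := mSpan_le fun v hv v' hv' =>
    pVV h2 h3 ω hωmul hbern e he hωe hv hv'
  have hUUV : mSpan U U ≤ V := mSpan_le fun u hu u' hu' =>
    pUU h2 h3 ω hωmul hbern e he hωe hu hu'
  have zeroU_VV : ∀ x ∈ U, ∀ y ∈ mSpan V V, x * y = 0 := by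
    intro x hx y hy
    have : x * y ∈ (⊥ : Submodule K A) := by
      refine mul_mSpan_mem (fun v hv v' hv' => ?_) hy
      rw [Submodule.mem_bot]
      exact idA h2 h3 ω hωmul hbern e he hωe hx hv hv'
    rwa [Submodule.mem_bot] at this
  have hVVzero : ∀ x ∈ mSpan V V, ∀ y ∈ mSpan V V, x * y = 0 := by
    intro x hx y hy
    exact zeroU_VV x (hVVU hx) y hy
  have zeroUUVV : ∀ x ∈ mSpan U U, ∀ y ∈ mSpan V V, x * y = 0 := by
    intro x hx y hy
    have : x * y ∈ (⊥ : Submodule K A) := by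
      refine mSpan_mul_mSpan_mem (fun u hu u' hu' v hv v' hv' => ?_) x hx y hy
      rw [Submodule.mem_bot, mul_comm]
      exact idVVUU h2 h3 ω hωmul hbern e he hωe hu hu' hv hv'
    rwa [Submodule.mem_bot] at this
  -- V·V is finite dimensional
  have finVV : FiniteDimensional K (mSpan V V) := by
    refine tool ω hdcc (mSpan V V) ⊥
      (fun x hx => LinearMap.mem_ker.mp (mSpan_le_ker hωmul hVN hx)) bot_le inferInstance ?_
    intro x hx y hy
    rw [Submodule.mem_bot]
    exact hVVzero x hx y hy
  -- W = U·U ⊔ V·V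
  set W : Submodule K A := mSpan U U ⊔ mSpan V V with hWdef
  have hWN : ∀ x ∈ W, ω x = 0 := by
    intro x hx
    have : W ≤ LinearMap.ker ω :=
      sup_le (mSpan_le_ker hωmul hUN) (mSpan_le_ker hωmul hVN)
    exact LinearMap.mem_ker.mp (this hx)
  have hCC : ∀ x ∈ W, ∀ y ∈ W, x * y ∈ mSpan V V := by
    intro x hx y hy
    rcases Submodule.mem_sup.mp hx with ⟨a1, ha1, b1, hb1, rfl⟩
    rcases Submodule.mem_sup.mp hy with ⟨a2, ha2, b2, hb2, rfl⟩
    have t2 : a1 * b2 = 0 := zeroUUVV _ ha1 _ hb2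
    have t3 : b1 * a2 = 0 := by rw [mul_comm]; exact zeroUUVV _ ha2 _ hb1
    have t4 : b1 * b2 = 0 := hVVzero _ hb1 _ hb2
    have hexp : (a1+b1)*(a2+b2) = a1*a2 := by
      rw [mul_add, add_mul, add_mul, t2, t3, t4]
      abel
    rw [hexp]
    exact mul_mem_mSpan (hUUV ha1) (hUUV ha2)
  have finW : FiniteDimensional K W :=
    tool ω hdcc W (mSpan V V) hWN le_sup_right finVV hCC
  have finUU : FiniteDimensional K (mSpan U U) := by
    haveI := finW
    exact Submodule.finiteDimensional_of_le (le_sup_left : mSpan U U ≤ W)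
  -- U0, the elements of U annihilating U·U
  set U0 : Submodule K A := U ⊓ lAnn (mSpan U U) with hU0def
  have finU0 : FiniteDimensional K U0 := by
    have hmulU0 : ∀ x ∈ U0 ⊔ W, ∀ y ∈ U0 ⊔ W, x * y ∈ W := by
      intro x hx y hy
      rcases Submodule.mem_sup.mp hx with ⟨s, hs, f, hf, rfl⟩
      rcases Submodule.mem_sup.mp hy with ⟨s', hs', f', hf', rfl⟩
      have hsU : s ∈ U := hs.1
      have hs'U : s' ∈ U := hs'.1
      have c1 : s * s' ∈ W := (le_sup_left : mSpan U U ≤ W) (mul_mem_mSpan hsU hs'U)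
      have c2 : s * f' = 0 := by
        rcases Submodule.mem_sup.mp hf' with ⟨p, hp, q, hq, rfl⟩
        rw [mul_add, hs.2 p hp, zeroU_VV s hsU q hq, add_zero]
      have c3 : f * s' = 0 := by
        rcases Submodule.mem_sup.mp hf with ⟨p, hp, q, hq, rfl⟩
        rw [mul_comm, mul_add, hs'.2 p hp, zeroU_VV s' hs'U q hq, add_zero]
      have c4 : f * f' ∈ W := (le_sup_right : mSpan V V ≤ W) (hCC f hf f' hf')
      have hexp : (s+f)*(s'+f') = s*s' + f*f' := by
        rw [mul_add, add_mul, add_mul, c2, c3]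
        abel
      rw [hexp]
      exact W.add_mem c1 c4
    have hN0 : ∀ x ∈ U0 ⊔ W, ω x = 0 := by
      intro x hx
      rcases Submodule.mem_sup.mp hx with ⟨s, hs, f, hf, rfl⟩
      rw [map_add, hUN s hs.1, hWN f hf, add_zero]
    have fintot := tool ω hdcc (U0 ⊔ W) W hN0 le_sup_right finW hmulU0
    haveI := fintot
    exact Submodule.finiteDimensional_of_le (le_sup_left : U0 ≤ U0 ⊔ W)
  -- for w ∈ V, the space U·w has zero multiplication, hence is finite dimensional
  have finUw : ∀ w : A, w ∈ V → FiniteDimensional K (U.map (LinearMap.mulRight K w)) := by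
    intro w hw
    refine tool ω hdcc _ ⊥ ?_ bot_le inferInstance ?_
    · rintro x ⟨u, hu, rfl⟩
      rw [LinearMap.mulRight_apply, hωmul, hUN u hu, zero_mul]
    · rintro x ⟨u, hu, rfl⟩ y ⟨u', hu', rfl⟩
      rw [Submodule.mem_bot, LinearMap.mulRight_apply, LinearMap.mulRight_apply]
      exact idD1 h2 h3 ω hωmul hbern e he hωe hu hu' hw
  -- a finite spanning set of U·U
  obtain ⟨Tf, hTspan⟩ := (Submodule.fg_iff_finiteDimensional (mSpan U U)).mpr finUU
  set T : Set A := (Tf : Set A) with hTdef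
  have hTfin : T.Finite := Tf.finite_toSet
  have hTV : ∀ w ∈ T, w ∈ V := fun w hw => hUUV (hTspan ▸ Submodule.subset_span hw)
  haveI := hTfin.to_subtype
  set D1 : Submodule K A := ⨆ w : T, U.map (LinearMap.mulRight K (w : A)) with hD1def
  have finD1 : FiniteDimensional K D1 := by
    haveI : ∀ w : T, FiniteDimensional K (U.map (LinearMap.mulRight K (w:A))) :=
      fun w => finUw _ (hTV _ w.2)
    infer_instance
  -- U is finite dimensional
  have finU : FiniteDimensional K U := by
    have key : ∀ (W' : Submodule K A), W' ≤ U →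
        FiniteDimensional K
          (W' ⊓ ⨅ w ∈ T, LinearMap.ker (LinearMap.mulRight K w) : Submodule K A) →
        FiniteDimensional K W' := by
      refine Set.Finite.induction_on_subset
        (motive := fun T' _ => ∀ (W' : Submodule K A), W' ≤ U →
          FiniteDimensional K
            (W' ⊓ ⨅ w ∈ T', LinearMap.ker (LinearMap.mulRight K w) : Submodule K A) →
          FiniteDimensional K W') T hTfin ?_ ?_
      · intro W' _ hfin
        rwa [iInf_emptyset, inf_top_eq] at hfin
      · intro c s hcT hsT hcs IH W' hW'U hfin
        rw [iInf_insert] at hfin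
        have hW''fin : FiniteDimensional K
            (W' ⊓ LinearMap.ker (LinearMap.mulRight K c) : Submodule K A) := by
          apply IH _ (le_trans inf_le_left hW'U)
          have heq : ((W' ⊓ LinearMap.ker (LinearMap.mulRight K c)) ⊓
              ⨅ w ∈ s, LinearMap.ker (LinearMap.mulRight K w)) =
              (W' ⊓ (LinearMap.ker (LinearMap.mulRight K c) ⊓
                ⨅ w ∈ s, LinearMap.ker (LinearMap.mulRight K w))) := inf_assoc _ _ _
          rw [heq]
          exact hfin
        refine fin_of_map_ker (LinearMap.mulRight K c) ?_ hW''fin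
        haveI := finD1
        have hmaple : Submodule.map (LinearMap.mulRight K c) W' ≤ D1 :=
          le_trans (Submodule.map_mono hW'U)
            (le_iSup (fun w : T => U.map (LinearMap.mulRight K (w:A))) ⟨c, hcT⟩)
        exact Submodule.finiteDimensional_of_le hmaple
    have hle0 : (U ⊓ ⨅ w ∈ T, LinearMap.ker (LinearMap.mulRight K w) : Submodule K A) ≤ U0 := by
      intro x hx
      have hx1 : x ∈ U := hx.1
      have h1 : x ∈ (⨅ w ∈ T, LinearMap.ker (LinearMap.mulRight K w) : Submodule K A) := hx.2
      have hx2 : ∀ w ∈ T, x * w = 0 := by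
        intro w hw
        rw [Submodule.mem_iInf] at h1
        have h2 := h1 w
        rw [Submodule.mem_iInf] at h2
        have h3 := h2 hw
        rwa [LinearMap.mem_ker, LinearMap.mulRight_apply] at h3
      refine ⟨hx1, ?_⟩
      intro z hz
      rw [← hTspan] at hz
      have hle : Submodule.span K T ≤ LinearMap.ker (LinearMap.mulLeft K x) := by
        rw [Submodule.span_le]
        intro w hw
        rw [SetLike.mem_coe, LinearMap.mem_ker, LinearMap.mulLeft_apply]
        exact hx2 w hw
      have hz' := hle hz
      rwa [LinearMap.mem_ker, LinearMap.mulLeft_apply] at hz'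
    haveI := finU0
    exact key U le_rfl (Submodule.finiteDimensional_of_le hle0)
  -- for u ∈ U, the space u·V has zero multiplication
  have finVu : ∀ u : A, u ∈ U → FiniteDimensional K (V.map (LinearMap.mulLeft K u)) := by
    intro u hu
    refine tool ω hdcc _ ⊥ ?_ bot_le inferInstance ?_
    · rintro x ⟨v, hv, rfl⟩
      rw [LinearMap.mulLeft_apply, hωmul, hUN u hu, zero_mul]
    · rintro x ⟨v, hv, rfl⟩ y ⟨v', hv', rfl⟩
      rw [Submodule.mem_bot, LinearMap.mulLeft_apply, LinearMap.mulLeft_apply]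
      exact idD2 h2 h3 ω hωmul hbern e he hωe hu hv hv'
  -- U·V is finite dimensional
  obtain ⟨Sf, hSspan⟩ := (Submodule.fg_iff_finiteDimensional U).mpr finU
  set S : Set A := (Sf : Set A) with hSdef
  have hSfin : S.Finite := Sf.finite_toSet
  have hSU : ∀ u ∈ S, u ∈ U := fun u hu => hSspan ▸ Submodule.subset_span hu
  haveI := hSfin.to_subtype
  set D2 : Submodule K A := ⨆ u : S, V.map (LinearMap.mulLeft K (u : A)) with hD2def
  have finD2 : FiniteDimensional K D2 := by
    haveI : ∀ u : S, FiniteDimensional K (V.map (LinearMap.mulLeft K (u:A))) :=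
      fun u => finVu _ (hSU _ u.2)
    infer_instance
  have finUV : FiniteDimensional K (mSpan U V) := by
    haveI := finD2
    refine Submodule.finiteDimensional_of_le (S₂ := D2) ?_
    refine mSpan_le ?_
    intro u hu v hv
    rw [← hSspan] at hu
    have hle : Submodule.span K S ≤ D2.comap (LinearMap.mulRight K v) := by
      rw [Submodule.span_le]
      intro w hw
      rw [SetLike.mem_coe, Submodule.mem_comap, LinearMap.mulRight_apply]
      have hmem : w * v ∈ V.map (LinearMap.mulLeft K w) := ⟨v, hv, rfl⟩
      exact le_iSup (fun u : S => V.map (LinearMap.mulLeft K (u:A))) ⟨w, hw⟩ hmem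
    have := hle hu
    rwa [Submodule.mem_comap, LinearMap.mulRight_apply] at this
  -- N·N lands in a finite dimensional submodule
  set N2 : Submodule K A := mSpan U U ⊔ (mSpan U V ⊔ mSpan V V) with hN2def
  have finN2 : FiniteDimensional K N2 := by
    haveI := finUU; haveI := finUV; haveI := finVV
    infer_instance
  have hN2ker : N2 ≤ LinearMap.ker ω :=
    sup_le (mSpan_le_ker hωmul hUN) (sup_le (mSpan_le_ker hωmul hUN) (mSpan_le_ker hωmul hVN))
  have hNmul : ∀ x ∈ LinearMap.ker ω, ∀ y ∈ LinearMap.ker ω, x * y ∈ N2 := by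
    intro x hx y hy
    have hxd : x = (2:K) • (e * x) + (x - (2:K) • (e * x)) := by abel
    have hyd : y = (2:K) • (e * y) + (y - (2:K) • (e * y)) := by abel
    have hxu : (2:K) • (e * x) ∈ U :=
      decompU h2 h3 ω hωmul hbern e he hωe (LinearMap.mem_ker.mp hx)
    have hxv : x - (2:K) • (e * x) ∈ V :=
      decompV h2 h3 ω hωmul hbern e he hωe (LinearMap.mem_ker.mp hx)
    have hyu : (2:K) • (e * y) ∈ U :=
      decompU h2 h3 ω hωmul hbern e he hωe (LinearMap.mem_ker.mp hy)
    have hyv : y - (2:K) • (e * y) ∈ V :=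
      decompV h2 h3 ω hωmul hbern e he hωe (LinearMap.mem_ker.mp hy)
    rw [hxd, hyd]
    set xu := (2:K) • (e * x)
    set xv := x - (2:K) • (e * x)
    set yu := (2:K) • (e * y)
    set yv := y - (2:K) • (e * y)
    have hexp : (xu + xv) * (yu + yv) = xu*yu + (xu*yv + (yu*xv + xv*yv)) := by
      rw [mul_add, add_mul, add_mul, mul_comm xv yu]
      abel
    rw [hexp]
    refine N2.add_mem ((le_sup_left : mSpan U U ≤ N2) (mul_mem_mSpan hxu hyu)) ?_
    refine N2.add_mem ?_ ?_
    · exact (le_trans le_sup_left le_sup_right : mSpan U V ≤ N2) (mul_mem_mSpan hxu hyv)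
    refine N2.add_mem ?_ ?_
    · exact (le_trans le_sup_left le_sup_right : mSpan U V ≤ N2) (mul_mem_mSpan hyu hxv)
    · exact (le_trans le_sup_right le_sup_right : mSpan V V ≤ N2) (mul_mem_mSpan hxv hyv)
  have finN : FiniteDimensional K (LinearMap.ker ω : Submodule K A) :=
    tool ω hdcc (LinearMap.ker ω) N2 (fun x hx => LinearMap.mem_ker.mp hx) hN2ker finN2 hNmul
  -- conclude
  have hsplit : (⊤ : Submodule K A) ≤ Submodule.span K {a} ⊔ LinearMap.ker ω := by
    intro x _
    have hker : x - ω x • a ∈ LinearMap.ker ω := by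
      rw [LinearMap.mem_ker, map_sub, map_smul, hωa, smul_eq_mul, mul_one, sub_self]
    have hxe : x = ω x • a + (x - ω x • a) := by abel
    rw [hxe]
    exact Submodule.add_mem_sup
      (Submodule.smul_mem _ _ (Submodule.mem_span_singleton_self a)) hker
  haveI : FiniteDimensional K (Submodule.span K ({a} : Set A)) :=
    (Submodule.fg_iff_finiteDimensional _).mp ⟨{a}, by simp⟩
  haveI := finN
  have fintop : FiniteDimensional K (⊤ : Submodule K A) :=
    Submodule.finiteDimensional_of_le hsplit
  exact LinearEquiv.finiteDimensional (Submodule.topEquiv (R := K) (M := A))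

end Main

theorem dcc_of_findim (hfin : FiniteDimensional K A)
    (f : ℕ → NonUnitalSubalgebra K A) (hant : Antitone f) :
    ∃ n, ∀ m, n ≤ m → f m = f n := by
  haveI := hfin
  set r : ℕ → ℕ := fun n => Module.finrank K (NonUnitalSubalgebra.toSubmodule (f n)) with hrdef
  have hne : (Set.range r).Nonempty := ⟨r 0, 0, rfl⟩
  obtain ⟨n₀, hn₀⟩ := Nat.sInf_mem hne
  refine ⟨n₀, fun m hm => ?_⟩
  have hle : NonUnitalSubalgebra.toSubmodule (f m) ≤ NonUnitalSubalgebra.toSubmodule (f n₀) := hant hm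
  have heq : NonUnitalSubalgebra.toSubmodule (f m) = NonUnitalSubalgebra.toSubmodule (f n₀) := by
    by_contra hne'
    have hlt : r m < r n₀ := Submodule.finrank_lt_finrank_of_lt (lt_of_le_of_ne hle hne')
    have hge : sInf (Set.range r) ≤ r m := Nat.sInf_le (Set.mem_range_self m)
    have hlt' : r m < sInf (Set.range r) := by rw [← hn₀]; exact hlt
    exact absurd hge (not_le_of_gt hlt')
  exact NonUnitalSubalgebra.toSubmodule_injective heq

end BernsteinDCC

/-- Let `A` be a Bernstein algebra over a field `K` of characteristic `≠ 2, 3`,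
with weight function `ω` and barideal `N = ker ω`.  The following are equivalent:
(i) `A` satisfies the descending chain condition on subalgebras;
(ii) `A` satisfies the descending chain condition on subalgebras contained in `N`;
(iii) `A` is finite-dimensional over `K`. -/
theorem bernstein_dcc_subalgebras {K A : Type*} [Field K]
    [NonUnitalNonAssocCommRing A] [Module K A] [SMulCommClass K A A] [IsScalarTower K A A]
    (h2 : (2 : K) ≠ 0) (h3 : (3 : K) ≠ 0)
    (ω : A →ₗ[K] K) (hωmul : ∀ x y : A, ω (x * y) = ω x * ω y) (hω0 : ω ≠ 0)
    (hbern : ∀ x : A, (x * x) * (x * x) = ω x ^ 2 • (x * x)) :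
    List.TFAE
      [ -- (i) d.c.c. on subalgebras
        ∀ f : ℕ → NonUnitalSubalgebra K A, Antitone f → ∃ n, ∀ m, n ≤ m → f m = f n,
        -- (ii) d.c.c. on subalgebras contained in N = ker ω
        ∀ f : ℕ → NonUnitalSubalgebra K A, (∀ k, ∀ x ∈ f k, ω x = 0) → Antitone f →
          ∃ n, ∀ m, n ≤ m → f m = f n,
        -- (iii) finite-dimensionality
        FiniteDimensional K A ] := by
  tfae_have 1 → 2 := fun h f _ hf => h f hf
  tfae_have 2 → 3 := fun h => BernsteinDCC.findim_of_dcc h2 h3 ω hωmul hω0 hbern h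
  tfae_have 3 → 1 := fun h f hf => BernsteinDCC.dcc_of_findim h f hf
  tfae_finish
end

section
/- Let A be a Bernstein algebra over a field K of characteristic ≠ 2, 3, with barideal N = ker(ω). Then A is Artinian (satisfies the descending chain condition on ideals of A) if and only if the algebra N is Artinian (satisfies the descending chain condition on ideals of N). -/
set_option linter.unusedSectionVars false
set_option maxHeartbeats 1000000

namespace BernsteinProof

variable {K A : Type*} [Field K] [NonUnitalNonAssocCommRing A] [Module K A]
  [SMulCommClass K A A] [IsScalarTower K A A]

private lemma smul_cancel {c : K} (hc : c ≠ 0) {v : A} (h : c • v = 0) : v = 0 := by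
  have h2 := congrArg (fun z => c⁻¹ • z) h
  simpa [smul_smul, inv_mul_cancel₀ hc] using h2

private lemma smul_cancel_eq {c : K} (hc : c ≠ 0) {v w : A} (h : c • v = c • w) : v = w := by
  have h0 : c • (v - w) = 0 := by rw [smul_sub, h, sub_self]
  exact sub_eq_zero.mp (smul_cancel hc h0)

private lemma key (e n : A) (hee : e * e = e) (t : K)
    (hb : ((e + t•n)*(e + t•n))*((e + t•n)*(e + t•n)) = (e + t•n)*(e + t•n)) :
    t•((4:K)•(e*(e*n)) - (2:K)•(e*n))
      + (t^2)•((2:K)•(e*(n*n)) + (4:K)•((e*n)*(e*n)) - n*n)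
      + (t^3)•((4:K)•((e*n)*(n*n))) + (t^4)•((n*n)*(n*n)) = 0 := by
  have hne : n * e = e * n := mul_comm n e
  have h1 : (e + t•n)*(e + t•n) = e + (2*t)•(e*n) + (t^2)•(n*n) := by
    simp only [mul_add, add_mul, smul_mul_assoc, mul_smul_comm, smul_smul, hee, hne]
    module
  rw [h1] at hb
  have hae : (e*n)*e = e*(e*n) := mul_comm _ _
  have hbe : (n*n)*e = e*(n*n) := mul_comm _ _
  have hba : (n*n)*(e*n) = (e*n)*(n*n) := mul_comm _ _
  have h2 : (e + (2*t)•(e*n) + (t^2)•(n*n)) * (e + (2*t)•(e*n) + (t^2)•(n*n))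
      = e + (4*t)•(e*(e*n)) + (2*t^2)•(e*(n*n)) + (4*t^2)•((e*n)*(e*n))
        + (4*t^3)•((e*n)*(n*n)) + (t^4)•((n*n)*(n*n)) := by
    simp only [mul_add, add_mul, smul_mul_assoc, mul_smul_comm, smul_smul, hee, hae, hbe, hba]
    module
  rw [h2] at hb
  have h3 : t•((4:K)•(e*(e*n)) - (2:K)•(e*n))
      + (t^2)•((2:K)•(e*(n*n)) + (4:K)•((e*n)*(e*n)) - n*n)
      + (t^3)•((4:K)•((e*n)*(n*n))) + (t^4)•((n*n)*(n*n))
      = (e + (4*t)•(e*(e*n)) + (2*t^2)•(e*(n*n)) + (4*t^2)•((e*n)*(e*n))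
        + (4*t^3)•((e*n)*(n*n)) + (t^4)•((n*n)*(n*n)))
        - (e + (2*t)•(e*n) + (t^2)•(n*n)) := by module
  rw [hb, sub_self] at h3
  exact h3

private lemma extract (h2 : (2 : K) ≠ 0) (h3 : (3 : K) ≠ 0) (c₁ c₂ c₃ c₄ : A)
    (h : ∀ t : K, t•c₁ + (t^2)•c₂ + (t^3)•c₃ + (t^4)•c₄ = 0) :
    c₁ = 0 ∧ c₂ = 0 ∧ c₃ = 0 ∧ c₄ = 0 := by
  have e1 := h 1
  have e2 := h (-1)
  have e3 := h 2
  have e4 := h (-2)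
  have h4 : (4:K) ≠ 0 := by
    intro hc; apply h2; have h44 : (4:K) = 2*2 := by norm_num
    rcases mul_eq_zero.mp (h44 ▸ hc) with h | h <;> exact h
  have k13 : (2:K) • (c₁ + c₃) = 0 := by
    have hh : (2:K) • (c₁ + c₃)
        = ((1:K)•c₁ + ((1:K)^2)•c₂ + ((1:K)^3)•c₃ + ((1:K)^4)•c₄)
          - (((-1:K))•c₁ + (((-1:K))^2)•c₂ + (((-1:K))^3)•c₃ + (((-1:K))^4)•c₄) := by
      module
    rw [e1, e2, sub_self] at hh; exact hh
  have k13' : c₁ + c₃ = 0 := smul_cancel h2 k13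
  have k14 : (4:K) • (c₁ + (4:K)•c₃) = 0 := by
    have hh : (4:K) • (c₁ + (4:K)•c₃)
        = ((2:K)•c₁ + ((2:K)^2)•c₂ + ((2:K)^3)•c₃ + ((2:K)^4)•c₄)
          - (((-2:K))•c₁ + (((-2:K))^2)•c₂ + (((-2:K))^3)•c₃ + (((-2:K))^4)•c₄) := by
      module
    rw [e3, e4, sub_self] at hh; exact hh
  have k14' : c₁ + (4:K)•c₃ = 0 := smul_cancel h4 k14
  have hc3 : c₃ = 0 := by
    have hh : (3:K) • c₃ = (c₁ + (4:K)•c₃) - (c₁ + c₃) := by module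
    rw [k13', k14', sub_self] at hh
    exact smul_cancel h3 hh
  have hc1 : c₁ = 0 := by have hh := k13'; rw [hc3, add_zero] at hh; exact hh
  have m24 : (2:K) • (c₂ + c₄) = 0 := by
    have hh : (2:K) • (c₂ + c₄)
        = ((1:K)•c₁ + ((1:K)^2)•c₂ + ((1:K)^3)•c₃ + ((1:K)^4)•c₄)
          + (((-1:K))•c₁ + (((-1:K))^2)•c₂ + (((-1:K))^3)•c₃ + (((-1:K))^4)•c₄) := by
      module
    rw [e1, e2, add_zero] at hh; exact hh
  have m24' : c₂ + c₄ = 0 := smul_cancel h2 m24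
  have h8 : (8:K) ≠ 0 := by
    intro hc; apply h2; have h88 : (8:K) = 2*(2*2) := by norm_num
    rw [h88] at hc
    rcases mul_eq_zero.mp hc with h | h
    · exact h
    · rcases mul_eq_zero.mp h with h | h <;> exact h
  have m28 : (8:K) • (c₂ + (4:K)•c₄) = 0 := by
    have hh : (8:K) • (c₂ + (4:K)•c₄)
        = ((2:K)•c₁ + ((2:K)^2)•c₂ + ((2:K)^3)•c₃ + ((2:K)^4)•c₄)
          + (((-2:K))•c₁ + (((-2:K))^2)•c₂ + (((-2:K))^3)•c₃ + (((-2:K))^4)•c₄) := by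
      module
    rw [e3, e4, add_zero] at hh; exact hh
  have m28' : c₂ + (4:K)•c₄ = 0 := smul_cancel h8 m28
  have hc4 : c₄ = 0 := by
    have hh : (3:K) • c₄ = (c₂ + (4:K)•c₄) - (c₂ + c₄) := by module
    rw [m24', m28', sub_self] at hh
    exact smul_cancel h3 hh
  have hc2 : c₂ = 0 := by have hh := m24'; rw [hc4, add_zero] at hh; exact hh
  exact ⟨hc1, hc2, hc3, hc4⟩

private lemma polar2 (e : A) (P : A → Prop)
    (c2z : ∀ n : A, P n → (2:K)•(e*(n*n)) + (4:K)•((e*n)*(e*n)) = n*n)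
    (Padd : ∀ {n m : A}, P n → P m → P (n + m))
    (h2 : (2:K) ≠ 0) :
    ∀ n m : A, P n → P m → (4:K)•((e*n)*(e*m)) + (2:K)•(e*(n*m)) = n*m := by
  intro n m hn hm
  have base := c2z (n+m) (Padd hn hm)
  have hmn : m * n = n * m := mul_comm m n
  have hem : (e*m)*(e*n) = (e*n)*(e*m) := mul_comm _ _
  have expand : (2:K)•(e*((n+m)*(n+m))) + (4:K)•((e*(n+m))*(e*(n+m)))
      = ((2:K)•(e*(n*n)) + (4:K)•((e*n)*(e*n)))
        + ((2:K)•(e*(m*m)) + (4:K)•((e*m)*(e*m)))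
        + ((2:K)•((4:K)•((e*n)*(e*m)) + (2:K)•(e*(n*m)))) := by
    simp only [mul_add, add_mul, hmn, hem]
    module
  rw [expand, c2z n hn, c2z m hm] at base
  have rhs : (n+m)*(n+m) = n*n + m*m + (2:K)•(n*m) := by
    simp only [mul_add, add_mul, hmn]; module
  rw [rhs] at base
  have hh : (2:K)•((4:K)•((e*n)*(e*m)) + (2:K)•(e*(n*m))) = (2:K)•(n*m) := by
    have := congrArg (fun z => z - (n*n + m*m)) base
    simpa [add_sub_cancel_left, add_comm, add_sub_cancel] using this
  exact smul_cancel_eq h2 hh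

private lemma polar3 (e : A) (P : A → Prop)
    (cube : ∀ n : A, P n → (e*n)*(n*n) = 0)
    (Padd : ∀ {n m : A}, P n → P m → P (n + m))
    (h2 : (2:K) ≠ 0) :
    ∀ m n i : A, P m → P n → P i →
      (e*m)*(n*i) + (e*n)*(m*i) + (e*i)*(m*n) = 0 := by
  have D : ∀ n m : A, P n → P m →
      (2:K)•((e*n)*(n*m)) + (e*n)*(m*m) + (e*m)*(n*n) + (2:K)•((e*m)*(n*m)) = 0 := by
    intro n m hn hm
    have base := cube (n+m) (Padd hn hm)
    have hmn : m * n = n * m := mul_comm m n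
    have exp : (e*(n+m))*((n+m)*(n+m))
        = (e*n)*(n*n) + (e*m)*(m*m)
          + ((2:K)•((e*n)*(n*m)) + (e*n)*(m*m) + (e*m)*(n*n) + (2:K)•((e*m)*(n*m))) := by
      simp only [mul_add, add_mul, hmn]
      module
    rw [exp, cube n hn, cube m hm, zero_add, zero_add] at base
    exact base
  intro m n i hm hn hi
  have base := D (n+i) m (Padd hn hi) hm
  have hin : i * n = n * i := mul_comm i n
  have him : i * m = m * i := mul_comm i m
  have hnm : n * m = m * n := mul_comm n m
  have exp : (2:K)•((e*(n+i))*((n+i)*m)) + (e*(n+i))*(m*m) + (e*m)*((n+i)*(n+i))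
        + (2:K)•((e*m)*((n+i)*m))
      = ((2:K)•((e*n)*(n*m)) + (e*n)*(m*m) + (e*m)*(n*n) + (2:K)•((e*m)*(n*m)))
        + ((2:K)•((e*i)*(i*m)) + (e*i)*(m*m) + (e*m)*(i*i) + (2:K)•((e*m)*(i*m)))
        + (2:K)•((e*n)*(m*i) + (e*i)*(m*n) + (e*m)*(n*i)) := by
    simp only [mul_add, add_mul, hin, him, hnm]
    module
  rw [exp, D n m hn hm, D i m hi hm, zero_add, zero_add] at base
  have hz := smul_cancel h2 base
  calc (e*m)*(n*i) + (e*n)*(m*i) + (e*i)*(m*n)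
      = (e*n)*(m*i) + (e*i)*(m*n) + (e*m)*(n*i) := by abel
    _ = 0 := hz

/-- The three linearized Bernstein identities. -/
private lemma identities (h2 : (2 : K) ≠ 0) (h3 : (3 : K) ≠ 0) (ω : A →ₗ[K] K)
    (hbern : ∀ x : A, (x * x) * (x * x) = ω x ^ 2 • (x * x))
    (e : A) (hee : e * e = e) (hωe : ω e = 1) :
    (∀ x : A, ω x = 0 → (2:K)•(e*(e*x)) = e*x) ∧
    (∀ n m : A, ω n = 0 → ω m = 0 → (4:K)•((e*n)*(e*m)) + (2:K)•(e*(n*m)) = n*m) ∧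
    (∀ m n i : A, ω m = 0 → ω n = 0 → ω i = 0 →
      (e*m)*(n*i) + (e*n)*(m*i) + (e*i)*(m*n) = 0) := by
  have hc : ∀ n : A, ω n = 0 →
      ((4:K)•(e*(e*n)) - (2:K)•(e*n) = 0) ∧
      ((2:K)•(e*(n*n)) + (4:K)•((e*n)*(e*n)) - n*n = 0) ∧
      ((4:K)•((e*n)*(n*n)) = 0) ∧
      ((n*n)*(n*n) = 0) := by
    intro n hn
    have hall : ∀ t : K,
        t•((4:K)•(e*(e*n)) - (2:K)•(e*n))
        + (t^2)•((2:K)•(e*(n*n)) + (4:K)•((e*n)*(e*n)) - n*n)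
        + (t^3)•((4:K)•((e*n)*(n*n))) + (t^4)•((n*n)*(n*n)) = 0 := by
      intro t
      apply key e n hee t
      have hb := hbern (e + t•n)
      have hω1 : ω (e + t•n) = 1 := by
        rw [map_add, map_smul, hωe, hn, smul_zero, add_zero]
      rw [hω1] at hb
      simpa using hb
    exact extract h2 h3 _ _ _ _ hall
  have h4 : (4:K) ≠ 0 := by
    intro hcc; apply h2; have h44 : (4:K) = 2*2 := by norm_num
    rcases mul_eq_zero.mp (h44 ▸ hcc) with h | h <;> exact h
  have Padd : ∀ {n m : A}, ω n = 0 → ω m = 0 → ω (n + m) = 0 := by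
    intro n m hn hm; rw [map_add, hn, hm, add_zero]
  constructor
  · intro x hx
    have := (hc x hx).1
    have hh := sub_eq_zero.mp this
    -- 4•(e*(e*x)) = 2•(e*x)
    have : (2:K)•((2:K)•(e*(e*x))) = (2:K)•(e*x) := by
      rw [smul_smul]; norm_num; exact hh
    exact smul_cancel_eq h2 this
  constructor
  · exact polar2 e (fun x => ω x = 0)
      (fun n hn => sub_eq_zero.mp (hc n hn).2.1) (fun hn hm => Padd hn hm) h2
  · refine polar3 e (fun x => ω x = 0) (fun n hn => ?_) (fun hn hm => Padd hn hm) h2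
    · exact smul_cancel h4 (hc n hn).2.2.1


private def tower (ω : A →ₗ[K] K) (e : A) (I : Submodule K A) : ℕ → Submodule K A
  | 0 => Submodule.span K
      {z | ∃ q x, ω q = 0 ∧ e * q = 0 ∧ x ∈ I ∧ z = q * (x - (2:K) • (e * x))}
  | (j+1) => Submodule.span K
      {z | ∃ q t, ω q = 0 ∧ e * q = 0 ∧ t ∈ tower ω e I j ∧ z = q * t}

private lemma tower_mono (ω : A →ₗ[K] K) (e : A) {I J : Submodule K A} (h : I ≤ J) :
    ∀ j, tower ω e I j ≤ tower ω e J j := by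
  intro j
  induction j with
  | zero =>
      apply Submodule.span_mono
      rintro z ⟨q, x, h1, h2, hx, rfl⟩
      exact ⟨q, x, h1, h2, h hx, rfl⟩
  | succ j ih =>
      apply Submodule.span_mono
      rintro z ⟨q, t, h1, h2, ht, rfl⟩
      exact ⟨q, t, h1, h2, ih ht, rfl⟩

private lemma tower_ker (ω : A →ₗ[K] K) (e : A) (I : Submodule K A)
    (hωmul : ∀ x y : A, ω (x * y) = ω x * ω y) :
    ∀ j, tower ω e I j ≤ LinearMap.ker ω := by
  intro j
  induction j with
  | zero =>
      rw [tower, Submodule.span_le]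
      rintro z ⟨q, x, h1, h2, hx, rfl⟩
      simp only [SetLike.mem_coe, LinearMap.mem_ker]
      rw [hωmul, h1, zero_mul]
  | succ j ih =>
      rw [tower, Submodule.span_le]
      rintro z ⟨q, t, h1, h2, ht, rfl⟩
      simp only [SetLike.mem_coe, LinearMap.mem_ker]
      rw [hωmul, h1, zero_mul]

private lemma tower_fix (ω : A →ₗ[K] K) (e : A) (I : Submodule K A)
    (hωmul : ∀ x y : A, ω (x * y) = ω x * ω y)
    (hωe : ω e = 1) (hI : I ≤ LinearMap.ker ω)
    (id2 : ∀ n m : A, ω n = 0 → ω m = 0 →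
      (4:K)•((e*n)*(e*m)) + (2:K)•(e*(n*m)) = n*m) :
    ∀ j, ∀ t ∈ tower ω e I j, (2:K) • (e * t) = t := by
  have key : ∀ (S : Set A),
      (∀ z ∈ S, (2:K) • (e * z) = z) → ∀ t ∈ Submodule.span K S, (2:K) • (e * t) = t := by
    intro S hS t ht
    have hsub : Submodule.span K S ≤
        LinearMap.ker ((2:K) • LinearMap.mulLeft K e - LinearMap.id) := by
      rw [Submodule.span_le]
      intro z hz
      simp only [SetLike.mem_coe, LinearMap.mem_ker, LinearMap.sub_apply,
        LinearMap.smul_apply, LinearMap.mulLeft_apply, LinearMap.id_apply, sub_eq_zero]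
      exact hS z hz
    have := hsub ht
    simpa [LinearMap.mem_ker, LinearMap.sub_apply, sub_eq_zero] using this
  intro j
  induction j with
  | zero =>
      rw [tower]
      apply key
      rintro z ⟨q, x, h1, h2, hx, rfl⟩
      have hωx : ω x = 0 := hI hx
      have hωs : ω (x - (2:K) • (e * x)) = 0 := by
        rw [map_sub, map_smul, hωmul, hωe, one_mul, hωx, smul_zero, sub_self]
      have := id2 q (x - (2:K) • (e * x)) h1 hωs
      rw [h2, zero_mul, smul_zero, zero_add] at this
      exact this
  | succ j ih =>
      rw [tower]
      apply key
      rintro z ⟨q, t, h1, h2, ht, rfl⟩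
      have hωt : ω t = 0 := tower_ker ω e I hωmul j ht
      have := id2 q t h1 hωt
      rw [h2, zero_mul, smul_zero, zero_add] at this
      exact this

private lemma tower_U (ω : A →ₗ[K] K) (e : A) (I : Submodule K A)
    (hωmul : ∀ x y : A, ω (x * y) = ω x * ω y)
    (hωe : ω e = 1) (hI : I ≤ LinearMap.ker ω)
    (idP : ∀ x : A, ω x = 0 → (2:K)•(e*(e*x)) = e*x)
    (id2 : ∀ n m : A, ω n = 0 → ω m = 0 →
      (4:K)•((e*n)*(e*m)) + (2:K)•(e*(n*m)) = n*m)
    (id3 : ∀ m n i : A, ω m = 0 → ω n = 0 → ω i = 0 →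
      (e*m)*(n*i) + (e*n)*(m*i) + (e*i)*(m*n) = 0) :
    ∀ j, ∀ m : A, ω m = 0 → ∀ t ∈ tower ω e I j, ((2:K) • (e * m)) * t = 0 := by
  have key : ∀ (S : Set A) (c : A),
      (∀ z ∈ S, c * z = 0) → ∀ t ∈ Submodule.span K S, c * t = 0 := by
    intro S c hS t ht
    have hsub : Submodule.span K S ≤ LinearMap.ker (LinearMap.mulLeft K c) := by
      rw [Submodule.span_le]
      intro z hz
      simpa [LinearMap.mem_ker] using hS z hz
    simpa [LinearMap.mem_ker] using hsub ht
  intro j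
  induction j with
  | zero =>
      intro m hm
      rw [tower]
      apply key
      rintro z ⟨q, x, h1, h2, hx, rfl⟩
      have hωx : ω x = 0 := hI hx
      have hωs : ω (x - (2:K) • (e * x)) = 0 := by
        rw [map_sub, map_smul, hωmul, hωe, one_mul, hωx, smul_zero, sub_self]
      have hse : e * (x - (2:K) • (e * x)) = 0 := by
        rw [mul_sub, mul_smul_comm, idP x hωx, sub_self]
      have h3 := id3 m q (x - (2:K) • (e * x)) hm h1 hωs
      rw [h2, hse, zero_mul, zero_mul, add_zero, add_zero] at h3
      rw [smul_mul_assoc, h3, smul_zero]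
  | succ j ih =>
      intro m hm
      rw [tower]
      apply key
      rintro z ⟨q, t, h1, h2, ht, rfl⟩
      have hωt : ω t = 0 := tower_ker ω e I hωmul j ht
      have hfixt : (2:K) • (e * t) = t := tower_fix ω e I hωmul hωe hI id2 j t ht
      have h3 := id3 m q t hm h1 hωt
      rw [h2, zero_mul, add_zero] at h3
      -- h3 : (e*m)*(q*t) + (e*t)*(m*q) = 0
      have hmq : ω (m * q) = 0 := by rw [hωmul, hm, zero_mul]
      have hPmq : m * q = (2:K) • (e * (m * q)) := by
        have := id2 q m h1 hm
        rw [h2, zero_mul, smul_zero, zero_add] at this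
        rw [mul_comm m q]
        exact this.symm
      have h5 : (e*m)*(q*t) = -((e*t)*(m*q)) := eq_neg_of_add_eq_zero_left h3
      have h6 : t * (m*q) = 0 := by
        rw [mul_comm t (m*q), hPmq]
        exact ih (m*q) hmq t ht
      calc ((2:K)•(e*m))*(q*t) = (2:K)•((e*m)*(q*t)) := smul_mul_assoc _ _ _
        _ = (2:K)•(-((e*t)*(m*q))) := by rw [h5]
        _ = -(((2:K)•(e*t))*(m*q)) := by rw [smul_neg, smul_mul_assoc]
        _ = -(t*(m*q)) := by rw [hfixt]
        _ = 0 := by rw [h6, neg_zero]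


private lemma forward (h2 : (2 : K) ≠ 0) (h3 : (3 : K) ≠ 0)
    (ω : A →ₗ[K] K) (hωmul : ∀ x y : A, ω (x * y) = ω x * ω y) (hω0 : ω ≠ 0)
    (hbern : ∀ x : A, (x * x) * (x * x) = ω x ^ 2 • (x * x))
    (hA : (∀ f : ℕ → Submodule K A, (∀ k, ∀ a : A, ∀ x ∈ f k, a * x ∈ f k) → Antitone f →
      ∃ n, ∀ m, n ≤ m → f m = f n)) :
    (∀ f : ℕ → Submodule K A, (∀ k, f k ≤ LinearMap.ker ω) →
      (∀ k, ∀ a ∈ LinearMap.ker ω, ∀ x ∈ f k, a * x ∈ f k) → Antitone f →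
      ∃ n, ∀ m, n ≤ m → f m = f n) := by
  intro f hfN hfI' hfanti
  classical
  have hfI : ∀ k, ∀ n : A, ω n = 0 → ∀ x ∈ f k, n * x ∈ f k := by
    intro k n hn x hx
    exact hfI' k n (LinearMap.mem_ker.mpr hn) x hx
  -- construct the idempotent e of weight 1
  obtain ⟨x₀, hx₀⟩ : ∃ x : A, ω x ≠ 0 := by
    by_contra hcon
    push_neg at hcon
    exact hω0 (LinearMap.ext fun x => by simpa using hcon x)
  have hx2 : ω x₀ * ω x₀ ≠ 0 := mul_ne_zero hx₀ hx₀
  set e : A := (ω x₀ * ω x₀)⁻¹ • (x₀ * x₀) with he_def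
  have hωe : ω e = 1 := by
    rw [he_def, map_smul, hωmul, smul_eq_mul, inv_mul_cancel₀ hx2]
  have hee : e * e = e := by
    rw [he_def, smul_mul_assoc, mul_smul_comm, hbern, smul_smul, smul_smul]
    congr 1
    rw [pow_two]
    field_simp
  obtain ⟨idP, id2, id3⟩ := identities h2 h3 ω hbern e hee hωe
  -- the projection-type map
  set Pe : A →ₗ[K] A := (2:K) • LinearMap.mulLeft K e with hPe_def
  have hPe : ∀ x : A, Pe x = (2:K) • (e * x) := by
    intro x; simp [hPe_def]
  have hωPe : ∀ x : A, ω x = 0 → ω (Pe x) = 0 := by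
    intro x hx
    rw [hPe, map_smul, hωmul, hωe, one_mul, hx, smul_zero]
  have hPeP : ∀ x : A, ω x = 0 → Pe (Pe x) = Pe x := by
    intro x hx
    calc Pe (Pe x) = (2:K) • ((2:K) • (e * (e * x))) := by
          rw [hPe, hPe, mul_smul_comm]
      _ = (2:K) • (e * x) := by rw [idP x hx]
      _ = Pe x := (hPe x).symm
  have hEx : ∀ x : A, e * x = (2:K)⁻¹ • Pe x := by
    intro x
    rw [hPe, smul_smul, inv_mul_cancel₀ h2, one_smul]
  -- the stable-part chain R
  set R : ℕ → Submodule K A := fun k => f k ⊓ Submodule.comap Pe (f k) with hR_def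
  have hRmem : ∀ k (x : A), x ∈ R k ↔ x ∈ f k ∧ Pe x ∈ f k := by
    intro k x
    simp [hR_def, Submodule.mem_inf, Submodule.mem_comap]
  have hRe : ∀ k, ∀ x ∈ R k, e * x ∈ R k := by
    intro k x hx
    obtain ⟨hx1, hx2'⟩ := (hRmem k x).mp hx
    refine (hRmem k _).mpr ⟨?_, ?_⟩
    · rw [hEx]; exact (f k).smul_mem _ hx2'
    · rw [hEx, map_smul, hPeP x (hfN k hx1)]
      exact (f k).smul_mem _ hx2'
  have hRn : ∀ k, ∀ n : A, ω n = 0 → ∀ x ∈ R k, n * x ∈ R k := by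
    intro k n hn x hx
    obtain ⟨hx1, hx2'⟩ := (hRmem k x).mp hx
    refine (hRmem k _).mpr ⟨hfI k n hn x hx1, ?_⟩
    have hid := id2 n x hn (hfN k hx1)
    -- Pe (n*x) = n*x - 4•((e*n)*(e*x))
    have hPenx : Pe (n * x) = n * x - (4:K) • ((e*n)*(e*x)) := by
      rw [hPe, eq_sub_iff_add_eq, add_comm]
      exact hid
    rw [hPenx]
    refine (f k).sub_mem (hfI k n hn x hx1) ?_
    have : (e*n)*(e*x) = (2:K)⁻¹ • ((e*n) * Pe x) := by
      rw [hEx x, mul_smul_comm]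
    rw [this, smul_smul]
    refine (f k).smul_mem _ (hfI k (e*n) ?_ _ hx2')
    rw [hωmul, hωe, one_mul, hn]
  have hsplit : ∀ (J : Submodule K A), (∀ x ∈ J, e * x ∈ J) →
      (∀ n : A, ω n = 0 → ∀ x ∈ J, n * x ∈ J) →
      ∀ (a x : A), x ∈ J → a * x ∈ J := by
    intro J hJe hJn a x hx
    have hdec : a * x = (ω a) • (e * x) + (a - (ω a) • e) * x := by
      rw [sub_mul, smul_mul_assoc (ω a) e x]; abel
    rw [hdec]
    refine J.add_mem (J.smul_mem _ (hJe x hx)) (hJn _ ?_ x hx)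
    rw [map_sub, map_smul, hωe, smul_eq_mul, mul_one, sub_self]
  have hRideal : ∀ k, ∀ a : A, ∀ x ∈ R k, a * x ∈ R k := by
    intro k
    exact hsplit (R k) (hRe k) (hRn k)
  have hRanti : Antitone R := by
    intro a b hab
    exact inf_le_inf (hfanti hab) (Submodule.comap_mono (hfanti hab))
  -- the chain H
  set T : ℕ → ℕ → Submodule K A := fun k j => tower ω e (f k) j with hT_def
  set W : ℕ → Submodule K A := fun k => (Submodule.map Pe (f k)) ⊔ (⨆ j, T k j) with hW_def
  set H : ℕ → Submodule K A := fun k => f k ⊔ W k with hH_def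
  have hWfix : ∀ k, ∀ z ∈ W k, Pe z = z := by
    intro k z hz
    have hsub : W k ≤ LinearMap.ker (Pe - LinearMap.id) := by
      rw [hW_def]
      apply sup_le
      · rintro z' hz'
        obtain ⟨x, hx, rfl⟩ := Submodule.mem_map.mp hz'
        simp only [LinearMap.mem_ker, LinearMap.sub_apply, LinearMap.id_apply, sub_eq_zero]
        exact hPeP x (hfN k hx)
      · apply iSup_le
        intro j
        intro z' hz'
        simp only [LinearMap.mem_ker, LinearMap.sub_apply, LinearMap.id_apply, sub_eq_zero]
        rw [hPe]
        exact tower_fix ω e (f k) hωmul hωe (hfN k) id2 j z' hz'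
    have := hsub hz
    simpa [LinearMap.mem_ker, sub_eq_zero] using this
  have hWH : ∀ k, W k ≤ H k := fun k => le_sup_right
  have hfH : ∀ k, f k ≤ H k := fun k => le_sup_left
  have hmapW : ∀ k, Submodule.map Pe (f k) ≤ W k := fun k => le_sup_left
  have htowW : ∀ k j, T k j ≤ W k := by
    intro k j
    exact le_trans (le_iSup (fun j => T k j) j) le_sup_right
  have hHe : ∀ k, ∀ x ∈ H k, e * x ∈ H k := by
    intro k x hx
    obtain ⟨y, hy, z, hz, rfl⟩ := Submodule.mem_sup.mp hx
    have h1 : e * y ∈ H k := by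
      rw [hEx]
      refine Submodule.smul_mem _ _ (hWH k (hmapW k ?_))
      exact Submodule.mem_map.mpr ⟨y, hy, rfl⟩
    have h2' : e * z ∈ H k := by
      have := hWfix k z hz
      rw [hEx, this]
      exact Submodule.smul_mem _ _ (hWH k hz)
    rw [mul_add]
    exact (H k).add_mem h1 h2'
  -- multiplication by elements of N
  have hHn : ∀ k, ∀ n : A, ω n = 0 → ∀ x ∈ H k, n * x ∈ H k := by
    intro k n hn x hx
    -- the "V-part" of n
    set q : A := n - Pe n with hq_def
    have hq1 : ω q = 0 := by
      rw [hq_def, map_sub, hn, hωPe n hn, sub_self]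
    have hq2 : e * q = 0 := by
      rw [hq_def, mul_sub, hPe, mul_smul_comm, idP n hn, sub_self]
    have hnq : n = Pe n + q := by rw [hq_def]; abel
    obtain ⟨y, hy, z, hz, rfl⟩ := Submodule.mem_sup.mp hx
    have hcase1 : n * y ∈ H k := hfH k (hfI k n hn y hy)
    -- n * z for z ∈ W k
    have hcase2 : n * z ∈ H k := by
      obtain ⟨z₁, hz₁, z₂, hz₂, rfl⟩ := Submodule.mem_sup.mp hz
      -- z₁ ∈ map Pe (f k)
      have hc1 : n * z₁ ∈ H k := by
        obtain ⟨x', hx', rfl⟩ := Submodule.mem_map.mp hz₁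
        have hωx' : ω x' = 0 := hfN k hx'
        -- n * Pe x' = (Pe n) * (Pe x') + q * (Pe x')
        have hdec : n * Pe x' = (Pe n) * (Pe x') + q * (Pe x') := by
          conv_lhs => rw [hnq, add_mul]
        -- (Pe n)*(Pe x') = n*x' - Pe (n*x')
        have hterm1 : (Pe n) * (Pe x') = n * x' - Pe (n * x') := by
          have hid := id2 n x' hn hωx'
          rw [hPe, hPe, hPe, smul_mul_assoc, mul_smul_comm, smul_smul]
          have h44 : ((2:K) * 2) = 4 := by norm_num
          rw [h44, eq_sub_iff_add_eq]
          exact hid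
        -- q*(Pe x') = q*x' - q*(x' - 2•(e*x'))
        have hterm2 : q * (Pe x') = q * x' - q * (x' - (2:K) • (e * x')) := by
          rw [hPe, mul_sub]
          abel
        have hm1 : n * x' - Pe (n * x') ∈ H k := by
          refine (H k).sub_mem (hfH k (hfI k n hn x' hx')) ?_
          exact hWH k (hmapW k (Submodule.mem_map.mpr ⟨n * x', hfI k n hn x' hx', rfl⟩))
        have hm2 : q * x' - q * (x' - (2:K) • (e * x')) ∈ H k := by
          refine (H k).sub_mem (hfH k (hfI k q hq1 x' hx')) ?_
          refine hWH k (htowW k 0 ?_)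
          rw [hT_def]
          show _ ∈ tower ω e (f k) 0
          rw [tower]
          apply Submodule.subset_span
          exact ⟨q, x', hq1, hq2, hx', rfl⟩
        rw [hdec, hterm1, hterm2]
        exact (H k).add_mem hm1 hm2
      -- z₂ ∈ ⨆ towers
      have hc2 : n * z₂ ∈ H k := by
        have hsub : (⨆ j, T k j) ≤ Submodule.comap (LinearMap.mulLeft K n) (H k) := by
          apply iSup_le
          intro j t ht
          simp only [Submodule.mem_comap, LinearMap.mulLeft_apply]
          have hdec : n * t = (Pe n) * t + q * t := by conv_lhs => rw [hnq, add_mul]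
          have hm1 : (Pe n) * t = 0 := by
            rw [hPe]
            exact tower_U ω e (f k) hωmul hωe (hfN k) idP id2 id3 j n hn t ht
          have hm2 : q * t ∈ T k (j+1) := by
            rw [hT_def]
            show _ ∈ tower ω e (f k) (j+1)
            rw [tower]
            apply Submodule.subset_span
            exact ⟨q, t, hq1, hq2, ht, rfl⟩
          rw [hdec, hm1, zero_add]
          exact hWH k (htowW k (j+1) hm2)
        have := hsub hz₂
        simpa [Submodule.mem_comap] using this
      rw [mul_add]
      exact (H k).add_mem hc1 hc2
    rw [mul_add]
    exact (H k).add_mem hcase1 hcase2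
  have hHideal : ∀ k, ∀ a : A, ∀ x ∈ H k, a * x ∈ H k := by
    intro k
    exact hsplit (H k) (hHe k) (hHn k)
  have hHanti : Antitone H := by
    intro a b hab
    rw [hH_def]
    refine sup_le_sup (hfanti hab) ?_
    rw [hW_def]
    refine sup_le_sup (Submodule.map_mono (hfanti hab)) ?_
    refine iSup_mono ?_
    intro j
    exact tower_mono ω e (hfanti hab) j
  -- apply the Artinian hypothesis
  obtain ⟨nR, hnR⟩ := hA R hRideal hRanti
  obtain ⟨nH, hnH⟩ := hA H hHideal hHanti
  refine ⟨max nR nH, fun m hm => ?_⟩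
  apply le_antisymm (hfanti hm)
  intro x hx
  -- x ∈ f (max nR nH), want x ∈ f m
  have hxH : x ∈ H m := by
    have h1 : x ∈ H (max nR nH) := hfH _ hx
    rw [hnH (max nR nH) (le_max_right _ _)] at h1
    rw [hnH m (le_trans (le_max_right _ _) hm)]
    exact h1
  obtain ⟨y, hy, z, hz, hyz⟩ := Submodule.mem_sup.mp hxH
  have hPz : Pe z = z := hWfix m z hz
  have hzfn : z ∈ f (max nR nH) := by
    have hyn : y ∈ f (max nR nH) := hfanti hm hy
    have : z = x - y := by rw [← hyz]; abel
    rw [this]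
    exact (f _).sub_mem hx hyn
  have hzR : z ∈ R (max nR nH) := by
    refine (hRmem _ _).mpr ⟨hzfn, ?_⟩
    rw [hPz]; exact hzfn
  have hzRm : z ∈ R m := by
    rw [hnR m (le_trans (le_max_left _ _) hm)]
    rw [← hnR (max nR nH) (le_max_left _ _)]
    exact hzR
  have hzfm : z ∈ f m := ((hRmem m z).mp hzRm).1
  rw [← hyz]
  exact (f m).add_mem hy hzfm

private lemma backward (h2 : (2 : K) ≠ 0) (h3 : (3 : K) ≠ 0)
    (ω : A →ₗ[K] K) (hωmul : ∀ x y : A, ω (x * y) = ω x * ω y) (hω0 : ω ≠ 0)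
    (hN : (∀ f : ℕ → Submodule K A, (∀ k, f k ≤ LinearMap.ker ω) →
      (∀ k, ∀ a ∈ LinearMap.ker ω, ∀ x ∈ f k, a * x ∈ f k) → Antitone f →
      ∃ n, ∀ m, n ≤ m → f m = f n)) :
    (∀ f : ℕ → Submodule K A, (∀ k, ∀ a : A, ∀ x ∈ f k, a * x ∈ f k) → Antitone f →
      ∃ n, ∀ m, n ≤ m → f m = f n) := by
  intro f hfI hfanti
  classical
  set g : ℕ → Submodule K A := fun k => f k ⊓ LinearMap.ker ω with hg
  have hgN : ∀ k, g k ≤ LinearMap.ker ω := fun k => inf_le_right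
  have hgI : ∀ k, ∀ a ∈ LinearMap.ker ω, ∀ x ∈ g k, a * x ∈ g k := by
    intro k a ha x hx
    refine Submodule.mem_inf.mpr ⟨hfI k a x (Submodule.mem_inf.mp hx).1, ?_⟩
    rw [LinearMap.mem_ker, hωmul, LinearMap.mem_ker.mp ha, zero_mul]
  have hganti : Antitone g := fun a b hab => inf_le_inf (hfanti hab) le_rfl
  obtain ⟨n₀, hn₀⟩ := hN g hgN hgI hganti
  by_cases hcase : ∃ j, n₀ ≤ j ∧ f j ≤ LinearMap.ker ω
  · obtain ⟨j, hj, hjN⟩ := hcase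
    refine ⟨j, fun m hm => ?_⟩
    have hmN : f m ≤ LinearMap.ker ω := le_trans (hfanti hm) hjN
    have h1 : g m = f m := inf_eq_left.mpr hmN
    have h2' : g j = f j := inf_eq_left.mpr hjN
    rw [← h1, ← h2', hn₀ m (le_trans hj hm), hn₀ j hj]
  · push_neg at hcase
    refine ⟨n₀, fun m hm => ?_⟩
    apply le_antisymm (hfanti hm)
    intro x hx
    obtain ⟨y, hy, hyω⟩ : ∃ y ∈ f m, ω y ≠ 0 := by
      have hnle := hcase m hm
      obtain ⟨y, hy, hy2⟩ := SetLike.not_le_iff_exists.mp hnle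
      exact ⟨y, hy, fun h => hy2 (LinearMap.mem_ker.mpr h)⟩
    have hzg : x - (ω x / ω y) • y ∈ g n₀ := by
      refine Submodule.mem_inf.mpr ⟨?_, ?_⟩
      · exact (f n₀).sub_mem hx ((f n₀).smul_mem _ (hfanti hm hy))
      · rw [LinearMap.mem_ker, map_sub, map_smul, smul_eq_mul, div_mul_cancel₀ _ hyω,
          sub_self]
    have hzm : x - (ω x / ω y) • y ∈ f m := by
      rw [← hn₀ m hm] at hzg
      exact (Submodule.mem_inf.mp hzg).1
    have hxeq : x = (x - (ω x / ω y) • y) + (ω x / ω y) • y := by abel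
    rw [hxeq]
    exact (f m).add_mem hzm ((f m).smul_mem _ hy)

end BernsteinProof


/-- A Bernstein algebra `A` over a field `K` of characteristic `≠ 2, 3` is
Artinian (satisfies the d.c.c. on ideals of `A`) if and only if its barideal `N = ker ω` is
Artinian (satisfies the d.c.c. on ideals of `N`, i.e. on subspaces `I ⊆ N` with `NI ⊆ I`). -/
theorem bernstein_noetherian_iff_barideal_noetherian {K A : Type*} [Field K]
    [NonUnitalNonAssocCommRing A] [Module K A] [SMulCommClass K A A] [IsScalarTower K A A]
    (h2 : (2 : K) ≠ 0) (h3 : (3 : K) ≠ 0)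
    (ω : A →ₗ[K] K) (hωmul : ∀ x y : A, ω (x * y) = ω x * ω y) (hω0 : ω ≠ 0)
    (hbern : ∀ x : A, (x * x) * (x * x) = ω x ^ 2 • (x * x)) :
    -- `A` is Artinian: every descending chain of ideals of `A` stabilizes
    (∀ f : ℕ → Submodule K A, (∀ k, ∀ a : A, ∀ x ∈ f k, a * x ∈ f k) → Antitone f →
      ∃ n, ∀ m, n ≤ m → f m = f n) ↔
    -- `N = ker ω` is Artinian: every descending chain of ideals of `N` stabilizes
    (∀ f : ℕ → Submodule K A, (∀ k, f k ≤ LinearMap.ker ω) →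
      (∀ k, ∀ a ∈ LinearMap.ker ω, ∀ x ∈ f k, a * x ∈ f k) → Antitone f →
      ∃ n, ∀ m, n ≤ m → f m = f n) := by
  constructor
  · exact fun hA => BernsteinProof.forward h2 h3 ω hωmul hω0 hbern hA
  · exact fun hN => BernsteinProof.backward h2 h3 ω hωmul hω0 hN
end

section
/- Let K be a field of characteristic ≠ 2, 3 and let N be the commutative K-algebra with basis {e_n : n ≥ 1} whose only nonzero products of basis elements are e_n·e_n = e_{n−1} for n ≥ 2. Then every nonzero proper subalgebra of N equals the span of {e_1, …, e_n} for some n ≥ 1, and each such subalgebra is an ideal of N. -/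
/-- Let `K` be a field of characteristic `≠ 2, 3` and let `N` be the
commutative `K`-algebra with basis `{eₙ : n ≥ 1}` whose only nonzero products of basis elements
are `eₙ · eₙ = e_{n-1}` for `n ≥ 2`.  Then every nonzero proper subalgebra of `N` equals the
span of `{e₁, …, eₙ}` for some `n ≥ 1`, and each such subalgebra is an ideal of `N`.

(The basis `{eₙ : n ≥ 1}` is encoded by a basis `b` of `N` indexed by `ℕ` via
`e i = b (i - 1)` for `i ≥ 1`.) -/
theorem zhevlakov_example_subalgebras {K N : Type*} [Field K]
    [NonUnitalNonAssocCommRing N] [Module K N] [SMulCommClass K N N] [IsScalarTower K N N]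
    (h2 : (2 : K) ≠ 0) (h3 : (3 : K) ≠ 0)
    (b : Module.Basis ℕ K N) (e : ℕ → N) (he : ∀ i, e i = b (i - 1))
    -- the only nonzero products of basis elements are `eₙ · eₙ = e_{n-1}` for `n ≥ 2`
    (hmul : ∀ i j, 1 ≤ i → 1 ≤ j → e i * e j = if i = j ∧ 2 ≤ i then e (i - 1) else 0) :
    -- every nonzero proper subalgebra of `N` is `span {e₁, …, eₙ}` for some `n ≥ 1`
    (∀ S : NonUnitalSubalgebra K N, S.toSubmodule ≠ ⊥ → S.toSubmodule ≠ ⊤ →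
      ∃ n, 1 ≤ n ∧ S.toSubmodule = Submodule.span K (e '' Set.Icc 1 n)) ∧
    -- each such subspace `span {e₁, …, eₙ}` is an ideal of `N`
    (∀ n, 1 ≤ n → ∀ a : N, ∀ x ∈ Submodule.span K (e '' Set.Icc 1 n),
      a * x ∈ Submodule.span K (e '' Set.Icc 1 n)) := by
  classical
  -- products of `b`-basis vectors
  have hb : ∀ k l : ℕ, b k * b l = if k = l ∧ 1 ≤ k then b (k - 1) else 0 := by
    intro k l
    have h := hmul (k + 1) (l + 1) (by omega) (by omega)
    rw [he (k + 1), he (l + 1)] at h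
    simp only [Nat.add_sub_cancel] at h
    rw [h]
    by_cases hc : k = l ∧ 1 ≤ k
    · rw [if_pos (by omega), if_pos hc, he k]
    · rw [if_neg (by omega), if_neg hc]
  -- multiplication by a basis vector
  have hbb : ∀ (a : N) (k : ℕ), a * b k = b.repr a k • (b k * b k) := by
    intro a k
    have hL : (LinearMap.mulRight K (b k) : N →ₗ[K] N)
        = (LinearMap.toSpanSingleton K N (b k * b k)).comp (b.coord k) := by
      apply b.ext
      intro j
      simp only [LinearMap.mulRight_apply, LinearMap.comp_apply, Module.Basis.coord_apply,
        Module.Basis.repr_self, LinearMap.toSpanSingleton_apply, Finsupp.single_apply]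
      by_cases hjk : j = k
      · subst hjk; simp
      · rw [hb j k, if_neg (by tauto), if_neg hjk, zero_smul]
    have := congrArg (fun f => f a) hL
    simpa using this
  -- coefficients of a square
  have hsq : ∀ (x : N) (k : ℕ), b.repr (x * x) k = (b.repr x (k + 1)) ^ 2 := by
    intro x k
    have hrepr := b.linearCombination_repr x
    have hx : x * x = ∑ i ∈ (b.repr x).support,
        ((b.repr x) i * (b.repr x) i) • (b i * b i) := by
      nth_rw 2 [← hrepr]
      rw [Finsupp.linearCombination_apply, Finsupp.sum, Finset.mul_sum]
      refine Finset.sum_congr rfl fun i _ => ?_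
      rw [mul_smul_comm, hbb x i, smul_smul]
    rw [hx, map_sum, Finsupp.finset_sum_apply]
    have hterm : ∀ i ∈ (b.repr x).support,
        (b.repr ((b.repr x i * b.repr x i) • (b i * b i))) k
          = if i = k + 1 then (b.repr x i) ^ 2 else 0 := by
      intro i _
      rw [map_smul, hb i i]
      by_cases hik : i = k + 1
      · subst hik
        rw [if_pos ⟨rfl, by omega⟩, if_pos rfl]
        simp [Module.Basis.repr_self, sq]
      · by_cases h1 : 1 ≤ i
        · rw [if_pos ⟨rfl, h1⟩, if_neg hik, Module.Basis.repr_self,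
            Finsupp.smul_apply, Finsupp.single_apply, if_neg (by omega)]
          simp
        · rw [if_neg (by omega), if_neg hik]
          simp
    rw [Finset.sum_congr rfl hterm,
      Finset.sum_ite_eq' (b.repr x).support (k + 1) (fun i => (b.repr x i) ^ 2)]
    by_cases hmem : k + 1 ∈ (b.repr x).support
    · rw [if_pos hmem]
    · rw [if_neg hmem]
      rw [Finsupp.notMem_support_iff] at hmem
      rw [hmem]; ring
  -- an element with bounded support is a sum of its basis components
  have hdecomp : ∀ (x : N) (m : ℕ), (∀ j, m < j → b.repr x j = 0) →
      x = ∑ j ∈ Finset.range (m + 1), b.repr x j • b j := by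
    intro x m hsupp
    conv_lhs => rw [← b.linearCombination_repr x]
    rw [Finsupp.linearCombination_apply]
    rw [Finsupp.sum_of_support_subset _ ?_ _ (by intro i _; simp)]
    intro i hi
    rw [Finsupp.mem_support_iff] at hi
    simp only [Finset.mem_range]
    by_contra hcon
    exact hi (hsupp i (by omega))
  -- main induction: recover basis vectors from an element of a subalgebra
  have main : ∀ (S : NonUnitalSubalgebra K N) (m : ℕ), ∀ x ∈ S,
      (∀ j, m < j → b.repr x j = 0) → b.repr x m ≠ 0 → ∀ j ≤ m, b j ∈ S := by
    intro S m
    induction m with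
    | zero =>
      intro x hxS hsupp hm j hj
      interval_cases j
      set c := b.repr x 0 with hc
      have hx0 : x = c • b 0 := by
        have h := hdecomp x 0 hsupp
        rwa [Finset.sum_range_one] at h
      have hb0 : b 0 = c⁻¹ • x := by
        rw [hx0, smul_smul, inv_mul_cancel₀ hm, one_smul]
      rw [hb0]
      exact S.smul_mem _ hxS
    | succ m ih =>
      intro x hxS hsupp hm j hj
      have hy : x * x ∈ S := S.mul_mem hxS hxS
      have hysupp : ∀ j, m < j → b.repr (x * x) j = 0 := by
        intro j hj
        rw [hsq x j, hsupp (j + 1) (by omega)]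
        ring
      have hym : b.repr (x * x) m ≠ 0 := by
        rw [hsq x m]
        exact pow_ne_zero _ hm
      have hIH := ih (x * x) hy hysupp hym
      rcases Nat.lt_or_ge j (m + 1) with hlt | hge
      · exact hIH j (by omega)
      · have hjeq : j = m + 1 := by omega
        subst hjeq
        set r := b.repr x with hr
        have hx : x = ∑ i ∈ Finset.range (m + 2), r i • b i := hdecomp x (m + 1) hsupp
        have hsum : (∑ i ∈ Finset.range (m + 1), r i • b i) ∈ S := by
          apply Submodule.sum_mem S.toSubmodule
          intro i hi
          exact Submodule.smul_mem S.toSubmodule _ (hIH i (by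
            have := Finset.mem_range.mp hi; omega))
        have hz : r (m + 1) • b (m + 1) ∈ S := by
          have heq : r (m + 1) • b (m + 1)
              = x - ∑ i ∈ Finset.range (m + 1), r i • b i := by
            rw [hx, Finset.sum_range_succ]
            abel
          rw [heq]
          exact Submodule.sub_mem S.toSubmodule hxS hsum
        have hfin : b (m + 1) = (r (m + 1))⁻¹ • (r (m + 1) • b (m + 1)) := by
          rw [smul_smul, inv_mul_cancel₀ hm, one_smul]
        rw [hfin]
        exact S.smul_mem _ hz
  constructor
  · intro S hbot htop
    set T : Set ℕ := {m | ∃ x ∈ S, b.repr x m ≠ 0} with hT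
    have hTne : T.Nonempty := by
      rcases Submodule.exists_mem_ne_zero_of_ne_bot hbot with ⟨x, hxS, hx0⟩
      have hne : b.repr x ≠ 0 := fun h => hx0 (by
        have := congrArg b.repr.symm h
        simpa using this)
      rcases Finsupp.ne_iff.mp hne with ⟨m, hm⟩
      exact ⟨m, x, hxS, by simpa using hm⟩
    have hTbdd : BddAbove T := by
      by_contra hub
      apply htop
      rw [eq_top_iff, ← b.span_eq, Submodule.span_le]
      rintro _ ⟨M, rfl⟩
      rw [not_bddAbove_iff] at hub
      rcases hub M with ⟨m, ⟨x, hxS, hxm⟩, hMm⟩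
      have hne : (b.repr x).support.Nonempty := ⟨m, Finsupp.mem_support_iff.mpr hxm⟩
      set t := (b.repr x).support.max' hne with ht
      have htmem : t ∈ (b.repr x).support := (b.repr x).support.max'_mem hne
      have htsupp : ∀ j, t < j → b.repr x j = 0 := by
        intro j hj
        by_contra hc
        exact absurd (Finset.le_max' _ j (Finsupp.mem_support_iff.mpr hc)) (by omega)
      have hmt : m ≤ t := Finset.le_max' _ m (Finsupp.mem_support_iff.mpr hxm)
      exact main S t x hxS htsupp (Finsupp.mem_support_iff.mp htmem) M (by omega)
    set M := sSup T with hM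
    have hMmem : M ∈ T := Nat.sSup_mem hTne hTbdd
    have hMub : ∀ m ∈ T, m ≤ M := fun m hm => le_csSup hTbdd hm
    refine ⟨M + 1, by omega, ?_⟩
    have himg : e '' Set.Icc 1 (M + 1) = b '' Set.Iic M := by
      ext y
      constructor
      · rintro ⟨i, ⟨hi1, hi2⟩, rfl⟩
        exact ⟨i - 1, by simp only [Set.mem_Iic]; omega, (he i).symm⟩
      · rintro ⟨j, hj, rfl⟩
        simp only [Set.mem_Iic] at hj
        refine ⟨j + 1, ⟨by omega, by omega⟩, ?_⟩
        rw [he (j + 1)]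
        simp
    rw [himg]
    apply le_antisymm
    · intro x hxS
      have hxsupp : ∀ j, M < j → b.repr x j = 0 := by
        intro j hj
        by_contra hc
        exact absurd (hMub j ⟨x, hxS, hc⟩) (by omega)
      rw [hdecomp x M hxsupp]
      apply Submodule.sum_mem
      intro i hi
      exact Submodule.smul_mem _ _
        (Submodule.subset_span ⟨i, by
          simp only [Set.mem_Iic]; exact Nat.lt_succ_iff.mp (Finset.mem_range.mp hi), rfl⟩)
    · rw [Submodule.span_le]
      rintro _ ⟨j, hj, rfl⟩
      rcases hMmem with ⟨x, hxS, hxM⟩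
      have hxsupp : ∀ i, M < i → b.repr x i = 0 := by
        intro i hi
        by_contra hc
        exact absurd (hMub i ⟨x, hxS, hc⟩) (by omega)
      exact main S M x hxS hxsupp hxM j (Set.mem_Iic.mp hj)
  · intro n hn a x hx
    induction hx using Submodule.span_induction with
    | mem y hy =>
      rcases hy with ⟨i, ⟨hi1, hi2⟩, rfl⟩
      rw [he i, hbb a (i - 1), hb (i - 1) (i - 1)]
      by_cases hi : 2 ≤ i
      · rw [if_pos ⟨rfl, by omega⟩]
        apply Submodule.smul_mem
        apply Submodule.subset_span
        refine ⟨i - 1, ⟨by omega, by omega⟩, ?_⟩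
        rw [he (i - 1)]
      · rw [if_neg (by omega), smul_zero]
        exact Submodule.zero_mem _
    | zero => rw [mul_zero]; exact Submodule.zero_mem _
    | add y z hy hz hy' hz' => rw [mul_add]; exact Submodule.add_mem _ hy' hz'
    | smul c y hy hy' => rw [mul_smul_comm]; exact Submodule.smul_mem _ _ hy'
end
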